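/- Let T be a Borel automorphism of an uncountable standard Borel space (X, 𝓑). Then there exists a map f : [0,1] → Aut(X, 𝓑) with f(0) = id, f(1) = T, such that f(t) belongs to the full group [T] for every t ∈ [0,1], and for every non-atomic Borel probability measure μ on X and every t₀ ∈ [0,1], μ(E(f(t), f(t₀))) → 0 as t → t₀. (The full group of any Borel automorphism is path-connected in the quotient uniform topology τ₀.) -/

import Mathlib

open MeasureTheory Set
open scoped ENNReal

/-- `T` is a Borel automorphism: both `T` and its inverse are measurable. -/
def IsBorelAuto {X : Type*} [MeasurableSpace X] (T : Equiv.Perm X) : Prop :=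
  Measurable T ∧ Measurable T.symm

/-- The set on which `S` and `T` (or their inverses) differ. -/
def Eset {X : Type*} (S T : Equiv.Perm X) : Set X :=
  {x | S x ≠ T x} ∪ {x | S⁻¹ x ≠ T⁻¹ x}

open scoped Classical

section Master
variable {X : Type*} [MeasurableSpace X]

set_option linter.unusedSectionVars false
set_option maxHeartbeats 1000000

lemma zpow_apply_zpow (T : Equiv.Perm X) (a b : ℤ) (x : X) :
    (T^a) ((T^b) x) = (T^(a+b)) x := by
  rw [← Equiv.Perm.mul_apply, ← zpow_add]

lemma measurable_pow_nat (S : Equiv.Perm X) (hS : Measurable S) :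
    ∀ n : ℕ, Measurable ⇑(S^n) := by
  intro n; induction n with
  | zero => simpa using measurable_id
  | succ n ih =>
      have h : (S^(n+1) : Equiv.Perm X) = S^n * S := by rw [pow_succ]
      rw [h]
      exact ih.comp hS

lemma measurable_zpow (T : Equiv.Perm X) (hT : Measurable T ∧ Measurable T.symm) :
    ∀ k : ℤ, Measurable ⇑(T^k) := by
  intro k
  cases k with
  | ofNat n => simpa using measurable_pow_nat T hT.1 n
  | negSucc n =>
      have h : (T^(Int.negSucc n) : Equiv.Perm X) = (T⁻¹)^(n+1) := by
        rw [zpow_negSucc, inv_pow]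
      rw [h]
      refine measurable_pow_nat T⁻¹ ?_ (n+1)
      simpa [Equiv.Perm.inv_def] using hT.2

noncomputable def PC (T : Equiv.Perm X) (C : Set X) (x : X) : X :=
  if h : T x ∈ C ∧ ∃ k : ℕ, (T ^ (-(k:ℤ))) x ∈ C then (T ^ (-(Nat.find h.2 : ℤ))) x else T x

noncomputable def QC (T : Equiv.Perm X) (C : Set X) (x : X) : X :=
  if h : x ∈ C ∧ ∃ k : ℕ, (T ^ ((k:ℤ)+1)) x ∈ C then (T ^ ((Nat.find h.2 : ℤ))) x else T⁻¹ x

lemma measurable_applyZ (T : Equiv.Perm X) (hT : Measurable T ∧ Measurable T.symm)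
    {θ : X → ℤ} (hθ : Measurable θ) : Measurable fun x => (T ^ (θ x)) x := by
  intro B hB
  have : (fun x => (T ^ (θ x)) x) ⁻¹' B = ⋃ k : ℤ, {x | θ x = k} ∩ (fun x => (T^k) x) ⁻¹' B := by
    ext x
    simp only [mem_preimage, mem_iUnion, mem_inter_iff, mem_setOf_eq]
    constructor
    · intro h; exact ⟨θ x, rfl, h⟩
    · rintro ⟨k, hk, h⟩; rwa [hk]
  rw [this]
  exact MeasurableSet.iUnion fun k =>
    (hθ (MeasurableSet.singleton k)).inter ((measurable_zpow T hT k) hB)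

noncomputable def dfind (T : Equiv.Perm X) (g : ℕ → ℤ) (C : Set X) (x : X) : ℕ :=
  if h : ∃ k : ℕ, (T ^ (g k)) x ∈ C then Nat.find h else 0

lemma measurable_dfind (T : Equiv.Perm X) (hT : Measurable T ∧ Measurable T.symm)
    (g : ℕ → ℤ) {C : Set X} (hC : MeasurableSet C) :
    Measurable (dfind T g C) := by
  apply measurable_to_countable'
  intro n
  classical
  set A : Set X := ⋃ k : ℕ, (fun x => (T ^ (g k)) x) ⁻¹' C with hA
  have hAm : MeasurableSet A :=
    MeasurableSet.iUnion fun k => (measurable_zpow T hT (g k)) hC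
  set Fib : ℕ → Set X := fun m =>
    ((fun x => (T ^ (g m)) x) ⁻¹' C) ∩ ⋂ j : ℕ, ⋂ (_ : j < m), ((fun x => (T ^ (g j)) x) ⁻¹' C)ᶜ
    with hFib
  have hFibm : ∀ m, MeasurableSet (Fib m) := fun m =>
    ((measurable_zpow T hT (g m)) hC).inter
      (MeasurableSet.iInter fun j => MeasurableSet.iInter fun _ =>
        ((measurable_zpow T hT (g j)) hC).compl)
  have key : ∀ x m, (dfind T g C x = m ∧ x ∈ A) ↔ x ∈ Fib m := by
    intro x m
    constructor
    · rintro ⟨hd, hxA⟩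
      have hex : ∃ k : ℕ, (T ^ (g k)) x ∈ C := by
        simpa [hA, mem_iUnion] using hxA
      rw [dfind, dif_pos hex] at hd
      subst hd
      refine ⟨Nat.find_spec hex, ?_⟩
      simp only [mem_iInter, mem_compl_iff, mem_preimage]
      intro j hj
      exact Nat.find_min hex hj
    · intro hx
      obtain ⟨hx1, hx2⟩ := hx
      simp only [mem_iInter, mem_compl_iff, mem_preimage] at hx2
      have hex : ∃ k : ℕ, (T ^ (g k)) x ∈ C := ⟨m, hx1⟩
      have hxA : x ∈ A := by simp only [hA, mem_iUnion, mem_preimage]; exact ⟨m, hx1⟩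
      refine ⟨?_, hxA⟩
      rw [dfind, dif_pos hex]
      exact (Nat.find_eq_iff hex).2 ⟨hx1, hx2⟩
  by_cases hn : n = 0
  · subst hn
    have : dfind T g C ⁻¹' {0} = Fib 0 ∪ Aᶜ := by
      ext x
      simp only [mem_preimage, mem_singleton_iff, mem_union, mem_compl_iff]
      constructor
      · intro h
        by_cases hxA : x ∈ A
        · exact Or.inl ((key x 0).1 ⟨h, hxA⟩)
        · exact Or.inr hxA
      · rintro (h | h)
        · exact ((key x 0).2 h).1
        · rw [dfind, dif_neg]
          intro hex
          exact h (by simp only [hA, mem_iUnion, mem_preimage]; exact hex)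
    rw [this]
    exact (hFibm 0).union hAm.compl
  · have : dfind T g C ⁻¹' {n} = Fib n := by
      ext x
      simp only [mem_preimage, mem_singleton_iff]
      constructor
      · intro h
        have hxA : x ∈ A := by
          by_contra hxA
          rw [dfind, dif_neg] at h
          · exact hn h.symm
          · intro hex
            exact hxA (by simp only [hA, mem_iUnion, mem_preimage]; exact hex)
        exact (key x n).1 ⟨h, hxA⟩
      · intro h
        exact ((key x n).2 h).1
    rw [this]
    exact hFibm n

lemma PC_eq_applyZ (T : Equiv.Perm X) (C : Set X) :
    PC T C = fun x => (T ^ (if T x ∈ C ∧ ∃ k : ℕ, (T ^ (-(k:ℤ))) x ∈ C then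
      -(dfind T (fun k => -(k:ℤ)) C x : ℤ) else 1)) x := by
  funext x
  by_cases h : T x ∈ C ∧ ∃ k : ℕ, (T ^ (-(k:ℤ))) x ∈ C
  · rw [PC, dif_pos h, if_pos h, dfind, dif_pos h.2]
  · rw [PC, dif_neg h, if_neg h, zpow_one]

lemma QC_eq_applyZ (T : Equiv.Perm X) (C : Set X) :
    QC T C = fun x => (T ^ (if x ∈ C ∧ ∃ k : ℕ, (T ^ ((k:ℤ)+1)) x ∈ C then
      (dfind T (fun k => (k:ℤ)+1) C x : ℤ) else -1)) x := by
  funext x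
  by_cases h : x ∈ C ∧ ∃ k : ℕ, (T ^ ((k:ℤ)+1)) x ∈ C
  · rw [QC, dif_pos h, if_pos h, dfind, dif_pos h.2]
  · rw [QC, dif_neg h, if_neg h, zpow_neg_one]

lemma measurable_PC (T : Equiv.Perm X) (hT : Measurable T ∧ Measurable T.symm)
    {C : Set X} (hC : MeasurableSet C) : Measurable (PC T C) := by
  rw [PC_eq_applyZ]
  apply measurable_applyZ T hT
  apply Measurable.ite
  · have : {x | T x ∈ C ∧ ∃ k : ℕ, (T ^ (-(k:ℤ))) x ∈ C}
        = (⇑T ⁻¹' C) ∩ ⋃ k : ℕ, (fun x => (T ^ (-(k:ℤ))) x) ⁻¹' C := by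
      ext x; simp only [mem_inter_iff, mem_preimage, mem_iUnion, mem_setOf_eq]
    rw [this]
    exact (hT.1 hC).inter (MeasurableSet.iUnion fun k => (measurable_zpow T hT _) hC)
  · exact ((measurable_of_countable (fun n : ℕ => -(n:ℤ))).comp
      (measurable_dfind T hT _ hC))
  · exact measurable_const

lemma measurable_QC (T : Equiv.Perm X) (hT : Measurable T ∧ Measurable T.symm)
    {C : Set X} (hC : MeasurableSet C) : Measurable (QC T C) := by
  rw [QC_eq_applyZ]
  apply measurable_applyZ T hT
  apply Measurable.ite
  · have : {x | x ∈ C ∧ ∃ k : ℕ, (T ^ ((k:ℤ)+1)) x ∈ C}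
        = C ∩ ⋃ k : ℕ, (fun x => (T ^ ((k:ℤ)+1)) x) ⁻¹' C := by
      ext x; simp only [mem_inter_iff, mem_preimage, mem_iUnion, mem_setOf_eq]
    rw [this]
    exact hC.inter (MeasurableSet.iUnion fun k => (measurable_zpow T hT _) hC)
  · exact ((measurable_of_countable (fun n : ℕ => (n:ℤ))).comp
      (measurable_dfind T hT _ hC))
  · exact measurable_const

lemma PC_not_mem (T : Equiv.Perm X) {C : Set X} {x : X} (h : T x ∉ C) : PC T C x = T x := by
  rw [PC, dif_neg (fun hc => h hc.1)]

lemma QC_not_mem (T : Equiv.Perm X) {C : Set X} {x : X} (h : x ∉ C) : QC T C x = T⁻¹ x := by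
  rw [QC, dif_neg (fun hc => h hc.1)]

lemma PC_self_mem (T : Equiv.Perm X) {C : Set X} {x : X} (hx : x ∈ C) (h : T x ∈ C) :
    PC T C x = x := by
  have hb : ∃ k : ℕ, (T ^ (-(k:ℤ))) x ∈ C := ⟨0, by simpa using hx⟩
  rw [PC, dif_pos ⟨h, hb⟩]
  have h0 : Nat.find hb = 0 := Nat.find_eq_zero hb |>.2 (by simpa using hx)
  have : Nat.find (⟨h, hb⟩ : T x ∈ C ∧ ∃ k : ℕ, (T ^ (-(k:ℤ))) x ∈ C).2 = 0 := h0
  rw [this]; simp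

lemma QC_self_mem (T : Equiv.Perm X) {C : Set X} {x : X} (hx : x ∈ C) (h : T x ∈ C) :
    QC T C x = x := by
  have hf : ∃ k : ℕ, (T ^ ((k:ℤ)+1)) x ∈ C := ⟨0, by simpa using h⟩
  rw [QC, dif_pos ⟨hx, hf⟩]
  have h0 : Nat.find hf = 0 := Nat.find_eq_zero hf |>.2 (by simpa using h)
  have : Nat.find (⟨hx, hf⟩ : x ∈ C ∧ ∃ k : ℕ, (T ^ ((k:ℤ)+1)) x ∈ C).2 = 0 := h0
  rw [this]; simp

lemma QC_PC (T : Equiv.Perm X) (C : Set X)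
    (H1 : ∀ y, T y ∈ C → ∃ k : ℕ, (T ^ (-(k:ℤ))) y ∈ C)
    (x : X) : QC T C (PC T C x) = x := by
  by_cases hTx : T x ∈ C
  · have hb : ∃ k : ℕ, (T ^ (-(k:ℤ))) x ∈ C := H1 x hTx
    have h1 : PC T C x = (T ^ (-(Nat.find hb : ℤ))) x := by rw [PC, dif_pos ⟨hTx, hb⟩]
    set p := Nat.find hb with hp
    set y := (T ^ (-(p:ℤ))) x with hy
    have hyC : y ∈ C := Nat.find_spec hb
    have hTy : (T ^ ((p:ℤ)+1)) y = T x := by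
      rw [hy, zpow_apply_zpow]
      have : (p:ℤ)+1 + -(p:ℤ) = 1 := by ring
      rw [this, zpow_one]
    have hfy : ∃ k : ℕ, (T ^ ((k:ℤ)+1)) y ∈ C := ⟨p, by rw [hTy]; exact hTx⟩
    have h2 : QC T C y = (T ^ ((Nat.find hfy : ℤ))) y := by rw [QC, dif_pos ⟨hyC, hfy⟩]
    set q := Nat.find hfy with hq
    have hqp : q ≤ p := Nat.find_le (by rw [hTy]; exact hTx)
    have hqeq : q = p := by
      by_contra hne
      have hlt : q < p := lt_of_le_of_ne hqp hne
      have hspec : (T ^ ((q:ℤ)+1)) y ∈ C := Nat.find_spec hfy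
      have harith : (q:ℤ)+1 + -(p:ℤ) = -(((p - q - 1 : ℕ)):ℤ) := by omega
      have heq : (T ^ ((q:ℤ)+1)) y = (T ^ (-((p - q - 1 : ℕ):ℤ))) x := by
        rw [hy, zpow_apply_zpow, harith]
      rw [heq] at hspec
      exact Nat.find_min hb (show p - q - 1 < p by omega) hspec
    rw [h1, h2, hqeq, hy, zpow_apply_zpow]
    simp
  · rw [PC_not_mem T hTx, QC_not_mem T hTx]
    simp

lemma PC_QC (T : Equiv.Perm X) (C : Set X)
    (H2 : ∀ y, y ∈ C → ∃ k : ℕ, (T ^ ((k:ℤ)+1)) y ∈ C)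
    (x : X) : PC T C (QC T C x) = x := by
  by_cases hx : x ∈ C
  · have hf : ∃ k : ℕ, (T ^ ((k:ℤ)+1)) x ∈ C := H2 x hx
    have h1 : QC T C x = (T ^ ((Nat.find hf : ℤ))) x := by rw [QC, dif_pos ⟨hx, hf⟩]
    set q := Nat.find hf with hq
    set z := (T ^ (q:ℤ)) x with hz
    have hTz : T z ∈ C := by
      have h3 : T z = (T ^ (1 + (q:ℤ))) x := by
        rw [hz, ← zpow_apply_zpow, zpow_one]
      have h4 : (1 + (q:ℤ)) = (q:ℤ)+1 := by ring
      rw [h3, h4]; exact Nat.find_spec hf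
    have hbz : ∃ k : ℕ, (T ^ (-(k:ℤ))) z ∈ C := ⟨q, by rw [hz, zpow_apply_zpow]; simpa using hx⟩
    have h2 : PC T C z = (T ^ (-(Nat.find hbz : ℤ))) z := by rw [PC, dif_pos ⟨hTz, hbz⟩]
    set p := Nat.find hbz with hp
    have hpq : p ≤ q := Nat.find_le (by rw [hz, zpow_apply_zpow]; simpa using hx)
    have hpeq : p = q := by
      by_contra hne
      have hlt : p < q := lt_of_le_of_ne hpq hne
      have hspec : (T ^ (-(p:ℤ))) z ∈ C := Nat.find_spec hbz
      have harith : -(p:ℤ) + (q:ℤ) = ((q - p - 1 : ℕ):ℤ)+1 := by omega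
      have heq : (T ^ (-(p:ℤ))) z = (T ^ (((q - p - 1 : ℕ):ℤ)+1)) x := by
        rw [hz, zpow_apply_zpow, harith]
      rw [heq] at hspec
      exact Nat.find_min hf (show q - p - 1 < q by omega) hspec
    rw [h1, h2, hpeq, hz, zpow_apply_zpow]
    simp
  · rw [QC_not_mem T hx, PC_not_mem T (by simpa using hx)]
    simp


lemma agree_PC (T : Equiv.Perm X) {C C' : Set X} (hsub : C' ⊆ C) {x : X}
    (hb' : ∃ k : ℕ, (T ^ (-(k:ℤ))) x ∈ C')
    (hdiff : PC T C x ≠ PC T C' x) :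
    ∃ j : ℤ, (T^j) x ∈ C ∧ (T^j) x ∉ C' ∧ -(Nat.find hb' : ℤ) < j ∧ j ≤ 1 := by
  by_cases hTx' : T x ∈ C'
  · have hTx : T x ∈ C := hsub hTx'
    have hbC : ∃ k : ℕ, (T ^ (-(k:ℤ))) x ∈ C := ⟨Nat.find hb', hsub (Nat.find_spec hb')⟩
    have h1 : PC T C x = (T ^ (-(Nat.find hbC : ℤ))) x := by rw [PC, dif_pos ⟨hTx, hbC⟩]
    have h2 : PC T C' x = (T ^ (-(Nat.find hb' : ℤ))) x := by rw [PC, dif_pos ⟨hTx', hb'⟩]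
    have hple : Nat.find hbC ≤ Nat.find hb' := Nat.find_le (hsub (Nat.find_spec hb'))
    have hne : Nat.find hbC ≠ Nat.find hb' := by
      intro h; apply hdiff; rw [h1, h2, h]
    have hlt : Nat.find hbC < Nat.find hb' := lt_of_le_of_ne hple hne
    exact ⟨-(Nat.find hbC : ℤ), Nat.find_spec hbC, Nat.find_min hb' hlt, by omega, by omega⟩
  · by_cases hTx : T x ∈ C
    · refine ⟨1, ?_, ?_, by omega, le_refl 1⟩
      · rw [zpow_one]; exact hTx
      · rw [zpow_one]; exact hTx'
    · exfalso; apply hdiff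
      rw [PC_not_mem T hTx, PC_not_mem T hTx']

lemma agree_QC (T : Equiv.Perm X) {C C' : Set X} (hsub : C' ⊆ C) {x : X}
    (hf' : ∃ k : ℕ, (T ^ ((k:ℤ)+1)) x ∈ C')
    (hdiff : QC T C x ≠ QC T C' x) :
    ∃ j : ℤ, (T^j) x ∈ C ∧ (T^j) x ∉ C' ∧ 0 ≤ j ∧ j ≤ (Nat.find hf' : ℤ) + 1 := by
  by_cases hx' : x ∈ C'
  · have hx : x ∈ C := hsub hx'
    have hfC : ∃ k : ℕ, (T ^ ((k:ℤ)+1)) x ∈ C := ⟨Nat.find hf', hsub (Nat.find_spec hf')⟩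
    have h1 : QC T C x = (T ^ ((Nat.find hfC : ℤ))) x := by rw [QC, dif_pos ⟨hx, hfC⟩]
    have h2 : QC T C' x = (T ^ ((Nat.find hf' : ℤ))) x := by rw [QC, dif_pos ⟨hx', hf'⟩]
    have hqle : Nat.find hfC ≤ Nat.find hf' := Nat.find_le (hsub (Nat.find_spec hf'))
    have hne : Nat.find hfC ≠ Nat.find hf' := by
      intro h; apply hdiff; rw [h1, h2, h]
    have hlt : Nat.find hfC < Nat.find hf' := lt_of_le_of_ne hqle hne
    exact ⟨(Nat.find hfC : ℤ)+1, Nat.find_spec hfC, Nat.find_min hf' hlt, by omega, by omega⟩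
  · by_cases hx : x ∈ C
    · refine ⟨0, ?_, ?_, le_refl 0, by omega⟩
      · rw [zpow_zero]; simpa using hx
      · rw [zpow_zero]; simpa using hx'
    · exfalso; apply hdiff
      rw [QC_not_mem T hx, QC_not_mem T hx']

lemma countable_orbit (T : Equiv.Perm X) (p : X) :
    {x | ∃ k : ℤ, (T^k) x = p}.Countable := by
  have : {x | ∃ k : ℤ, (T^k) x = p} ⊆ Set.range (fun k : ℤ => (T^k) p) := by
    rintro x ⟨k, hk⟩
    refine ⟨-k, ?_⟩
    show (T ^ (-k)) p = x
    rw [← hk, zpow_apply_zpow]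
    simp
  exact (Set.countable_range _).mono this

lemma countable_saturation (T : Equiv.Perm X) {S : Set X} (hS : S.Countable) :
    {x | ∃ k : ℤ, (T^k) x ∈ S}.Countable := by
  have : {x | ∃ k : ℤ, (T^k) x ∈ S} ⊆ ⋃ p ∈ S, {x | ∃ k : ℤ, (T^k) x = p} := by
    rintro x ⟨k, hk⟩
    simp only [mem_iUnion, mem_setOf_eq]
    exact ⟨(T^k) x, hk, k, rfl⟩
  exact (hS.biUnion fun p _ => countable_orbit T p).mono this


/-! ### Master construction -/

def CSet (W : Set X) (ψ c : X → ℝ≥0∞) (t : ℝ) : Set X :=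
  {x | x ∈ W ∧ ENNReal.ofReal t < ψ x} ∪ {x | x ∉ W ∧ ENNReal.ofReal t ≤ c x}

structure MasterData (T : Equiv.Perm X) (W : Set X) (ψ c : X → ℝ≥0∞) : Prop where
  hWT : ∀ x, x ∈ W ↔ T x ∈ W
  hcT : ∀ x, c (T x) = c x
  hψ0 : ∀ x ∈ W, 0 < ψ x
  hψ1 : ∀ x ∈ W, ψ x < 1
  hc1 : ∀ x, c x < 1
  hrecF : ∀ x ∈ W, ∀ t : ℝ≥0∞, t < 1 → ∀ m : ℤ, ∃ j : ℤ, m ≤ j ∧ t < ψ ((T^j) x)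
  hrecB : ∀ x ∈ W, ∀ t : ℝ≥0∞, t < 1 → ∀ m : ℤ, ∃ j : ℤ, j ≤ m ∧ t < ψ ((T^j) x)
  hψfib : ∀ v : ℝ≥0∞, {x | x ∈ W ∧ ψ x = v}.Countable
  hcfib : ∀ v : ℝ≥0∞, {x | x ∉ W ∧ c x = v}.Countable
  hWmeas : MeasurableSet W
  hψmeas : Measurable ψ
  hcmeas : Measurable c

variable {T : Equiv.Perm X} {W : Set X} {ψ c : X → ℝ≥0∞}

namespace MasterData

lemma memW_zpow (hD : MasterData T W ψ c) : ∀ k : ℤ, ∀ x, (x ∈ W ↔ (T^k) x ∈ W) := by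
  intro k
  induction k using Int.induction_on with
  | zero => intro x; simp
  | succ k ih =>
      intro x
      have h : (T ^ ((k:ℤ))) (T x) = (T^((k:ℤ)+1)) x := by
        have h2 := zpow_apply_zpow T (k:ℤ) 1 x
        rw [zpow_one] at h2
        exact h2
      rw [← h]
      exact (hD.hWT x).trans (ih (T x))
  | pred k ih =>
      intro x
      have h : (T^(-(k:ℤ))) (T⁻¹ x) = (T^(-(k:ℤ)-1)) x := by
        have h2 := zpow_apply_zpow T (-(k:ℤ)) (-1) x
        rw [zpow_neg_one] at h2
        have h3 : (-(k:ℤ)) + (-1) = -(k:ℤ) - 1 := by ring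
        rw [h3] at h2
        exact h2
      rw [← h]
      have hx := hD.hWT (T⁻¹ x)
      rw [show T (T⁻¹ x) = x from T.apply_symm_apply x] at hx
      exact hx.symm.trans (ih (T⁻¹ x))

lemma c_zpow (hD : MasterData T W ψ c) : ∀ k : ℤ, ∀ x, c ((T^k) x) = c x := by
  intro k
  induction k using Int.induction_on with
  | zero => intro x; simp
  | succ k ih =>
      intro x
      have h : (T ^ ((k:ℤ))) (T x) = (T^((k:ℤ)+1)) x := by
        have h2 := zpow_apply_zpow T (k:ℤ) 1 x
        rw [zpow_one] at h2
        exact h2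
      rw [← h, ih (T x), hD.hcT]
  | pred k ih =>
      intro x
      have h : (T^(-(k:ℤ))) (T⁻¹ x) = (T^(-(k:ℤ)-1)) x := by
        have h2 := zpow_apply_zpow T (-(k:ℤ)) (-1) x
        rw [zpow_neg_one] at h2
        have h3 : (-(k:ℤ)) + (-1) = -(k:ℤ) - 1 := by ring
        rw [h3] at h2
        exact h2
      rw [← h, ih (T⁻¹ x)]
      have hx := hD.hcT (T⁻¹ x)
      rw [show T (T⁻¹ x) = x from T.apply_symm_apply x] at hx
      exact hx.symm

lemma CSet_mono (hD : MasterData T W ψ c) {s t : ℝ} (hst : s ≤ t) :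
    CSet W ψ c t ⊆ CSet W ψ c s := by
  intro x hx
  rcases hx with ⟨h1, h2⟩ | ⟨h1, h2⟩
  · exact Or.inl ⟨h1, lt_of_le_of_lt (ENNReal.ofReal_le_ofReal hst) h2⟩
  · exact Or.inr ⟨h1, le_trans (ENNReal.ofReal_le_ofReal hst) h2⟩

lemma CSet_zero (hD : MasterData T W ψ c) : CSet W ψ c 0 = univ := by
  ext x
  simp only [CSet, mem_union, mem_setOf_eq, mem_univ, iff_true]
  by_cases hx : x ∈ W
  · exact Or.inl ⟨hx, by simpa using hD.hψ0 x hx⟩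
  · exact Or.inr ⟨hx, by simp⟩

lemma CSet_one (hD : MasterData T W ψ c) : CSet W ψ c 1 = ∅ := by
  ext x
  simp only [CSet, mem_union, mem_setOf_eq, mem_empty_iff_false, iff_false]
  rintro (⟨h1, h2⟩ | ⟨h1, h2⟩)
  · rw [ENNReal.ofReal_one] at h2
    exact absurd h2 (not_lt.2 (hD.hψ1 x h1).le)
  · rw [ENNReal.ofReal_one] at h2
    exact absurd h2 (not_le.2 (hD.hc1 x))

lemma exB (hD : MasterData T W ψ c) {x : X} (hx : x ∈ W) {t : ℝ}
    (ht : ENNReal.ofReal t < 1) : ∃ k : ℕ, (T ^ (-(k:ℤ))) x ∈ CSet W ψ c t := by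
  obtain ⟨j, hj0, hjlt⟩ := hD.hrecB x hx _ ht 0
  refine ⟨(-j).toNat, ?_⟩
  have hcast : -(((-j).toNat : ℕ) : ℤ) = j := by omega
  rw [hcast]
  exact Or.inl ⟨(hD.memW_zpow j x).1 hx, hjlt⟩

lemma exF (hD : MasterData T W ψ c) {x : X} (hx : x ∈ W) {t : ℝ}
    (ht : ENNReal.ofReal t < 1) : ∃ k : ℕ, (T ^ ((k:ℤ)+1)) x ∈ CSet W ψ c t := by
  obtain ⟨j, hj1, hjlt⟩ := hD.hrecF x hx _ ht 1
  refine ⟨(j-1).toNat, ?_⟩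
  have hcast : (((j-1).toNat : ℕ) : ℤ) + 1 = j := by omega
  rw [hcast]
  exact Or.inl ⟨(hD.memW_zpow j x).1 hx, hjlt⟩

lemma HC1 (hD : MasterData T W ψ c) (t : ℝ) :
    ∀ y, T y ∈ CSet W ψ c t → ∃ k : ℕ, (T ^ (-(k:ℤ))) y ∈ CSet W ψ c t := by
  intro y hy
  rcases hy with ⟨h1, h2⟩ | ⟨h1, h2⟩
  · have hyW : y ∈ W := (hD.hWT y).2 h1
    exact hD.exB hyW (lt_trans h2 (hD.hψ1 _ h1))
  · have hyW : y ∉ W := fun h => h1 ((hD.hWT y).1 h)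
    refine ⟨0, ?_⟩
    have : (T ^ (-(0:ℕ):ℤ)) y = y := by simp
    rw [this]
    rw [hD.hcT y] at h2
    exact Or.inr ⟨hyW, h2⟩

lemma HC2 (hD : MasterData T W ψ c) (t : ℝ) :
    ∀ y, y ∈ CSet W ψ c t → ∃ k : ℕ, (T ^ ((k:ℤ)+1)) y ∈ CSet W ψ c t := by
  intro y hy
  rcases hy with ⟨h1, h2⟩ | ⟨h1, h2⟩
  · exact hD.exF h1 (lt_trans h2 (hD.hψ1 _ h1))
  · refine ⟨0, ?_⟩
    have h0 : ((0:ℕ):ℤ) + 1 = (1:ℤ) := by norm_num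
    rw [h0, zpow_one]
    refine Or.inr ⟨fun h => h1 ((hD.hWT y).2 h), ?_⟩
    rw [hD.hcT y]
    exact h2

/-- The path of permutations. -/
noncomputable def fMap (hD : MasterData T W ψ c) (t : ℝ) : Equiv.Perm X :=
  { toFun := PC T (CSet W ψ c t)
    invFun := QC T (CSet W ψ c t)
    left_inv := QC_PC T _ (hD.HC1 t)
    right_inv := PC_QC T _ (hD.HC2 t) }

lemma fMap_apply (hD : MasterData T W ψ c) (t : ℝ) (x : X) :
    hD.fMap t x = PC T (CSet W ψ c t) x := rfl

lemma fMap_inv_apply (hD : MasterData T W ψ c) (t : ℝ) (x : X) :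
    (hD.fMap t)⁻¹ x = QC T (CSet W ψ c t) x := rfl

lemma fMap_zero (hD : MasterData T W ψ c) : hD.fMap 0 = 1 := by
  apply Equiv.ext
  intro x
  rw [fMap_apply, hD.CSet_zero]
  have := PC_self_mem T (mem_univ x) (mem_univ (T x))
  simpa using this

lemma fMap_one (hD : MasterData T W ψ c) : hD.fMap 1 = T := by
  apply Equiv.ext
  intro x
  rw [fMap_apply, hD.CSet_one]
  exact PC_not_mem T (notMem_empty _)

lemma fMap_fullgroup (hD : MasterData T W ψ c) (t : ℝ) (x : X) :
    ∃ n : ℤ, hD.fMap t x = (T^n) x := by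
  rw [fMap_apply, PC]
  by_cases h : T x ∈ CSet W ψ c t ∧ ∃ k : ℕ, (T ^ (-(k:ℤ))) x ∈ CSet W ψ c t
  · rw [dif_pos h]; exact ⟨_, rfl⟩
  · rw [dif_neg h]; exact ⟨1, by rw [zpow_one]⟩

lemma CSet_meas (hD : MasterData T W ψ c) (t : ℝ) : MeasurableSet (CSet W ψ c t) := by
  apply MeasurableSet.union
  · have : {x | x ∈ W ∧ ENNReal.ofReal t < ψ x} = W ∩ ψ ⁻¹' (Ioi (ENNReal.ofReal t)) := rfl
    rw [this]
    exact hD.hWmeas.inter (hD.hψmeas measurableSet_Ioi)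
  · have : {x | x ∉ W ∧ ENNReal.ofReal t ≤ c x} = Wᶜ ∩ c ⁻¹' (Ici (ENNReal.ofReal t)) := rfl
    rw [this]
    exact hD.hWmeas.compl.inter (hD.hcmeas measurableSet_Ici)

lemma fMap_borel (hD : MasterData T W ψ c) (hT : Measurable ⇑T ∧ Measurable ⇑T.symm) (t : ℝ) :
    Measurable ⇑(hD.fMap t) ∧ Measurable ⇑(hD.fMap t).symm := by
  constructor
  · exact measurable_PC T hT (hD.CSet_meas t)
  · exact measurable_QC T hT (hD.CSet_meas t)

lemma tendsto_seq_div (d : ℝ) : Filter.Tendsto (fun n:ℕ => d/(n+1)) Filter.atTop (nhds 0) := by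
  have h := tendsto_one_div_add_atTop_nhds_zero_nat (𝕜 := ℝ)
  have h2 := h.const_mul d
  simp only [mul_zero] at h2
  have h3 : (fun n:ℕ => d/(n+1)) = fun n:ℕ => d * (1/(n+1)) := by
    funext n
    rw [mul_one_div]
  rw [h3]
  exact h2

lemma ennreal_squeeze (v : ℝ≥0∞) (r d : ℝ)
    (hlow : ∀ n:ℕ, ENNReal.ofReal (r - d/(n+1)) ≤ v)
    (hupp : ∀ n:ℕ, v ≤ ENNReal.ofReal (r + d/(n+1))) : v = ENNReal.ofReal r := by
  have hδ := tendsto_seq_div d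
  have h1 : Filter.Tendsto (fun n:ℕ => ENNReal.ofReal (r - d/(n+1))) Filter.atTop
      (nhds (ENNReal.ofReal r)) := by
    have := (ENNReal.continuous_ofReal.tendsto r).comp
      (by simpa using Filter.Tendsto.sub (tendsto_const_nhds (x := r)) hδ)
    simpa [Function.comp_def] using this
  have h2 : Filter.Tendsto (fun n:ℕ => ENNReal.ofReal (r + d/(n+1))) Filter.atTop
      (nhds (ENNReal.ofReal r)) := by
    have := (ENNReal.continuous_ofReal.tendsto r).comp
      (by simpa using Filter.Tendsto.add (tendsto_const_nhds (x := r)) hδ)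
    simpa [Function.comp_def] using this
  exact le_antisymm (ge_of_tendsto h2 (Filter.Eventually.of_forall hupp))
    (le_of_tendsto h1 (Filter.Eventually.of_forall hlow))

lemma ennreal_one_le (w : ℝ≥0∞) (h : ∀ n:ℕ, ENNReal.ofReal (1 - 1/(n+1)) ≤ w) : 1 ≤ w := by
  have hδ := tendsto_seq_div 1
  have h1 : Filter.Tendsto (fun n:ℕ => ENNReal.ofReal (1 - 1/(n+1))) Filter.atTop
      (nhds (ENNReal.ofReal 1)) := by
    have := (ENNReal.continuous_ofReal.tendsto 1).comp
      (by simpa using Filter.Tendsto.sub (tendsto_const_nhds (x := (1:ℝ))) hδ)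
    simpa [Function.comp_def] using this
  rw [ENNReal.ofReal_one] at h1
  exact le_of_tendsto h1 (Filter.Eventually.of_forall h)

lemma nonW_low (hD : MasterData T W ψ c) {x : X} {s : ℝ} (hx : x ∉ W)
    (hc : c x < ENNReal.ofReal s) :
    PC T (CSet W ψ c s) x = T x ∧ QC T (CSet W ψ c s) x = T⁻¹ x := by
  have hTx : T x ∉ CSet W ψ c s := by
    rintro (⟨h1, _⟩ | ⟨_, h2⟩)
    · exact hx ((hD.hWT x).2 h1)
    · rw [hD.hcT x] at h2
      exact absurd h2 (not_le.2 hc)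
  have hxx : x ∉ CSet W ψ c s := by
    rintro (⟨h1, _⟩ | ⟨_, h2⟩)
    · exact hx h1
    · exact absurd h2 (not_le.2 hc)
  exact ⟨PC_not_mem T hTx, QC_not_mem T hxx⟩

lemma nonW_high (hD : MasterData T W ψ c) {x : X} {s : ℝ} (hx : x ∉ W)
    (hc : ENNReal.ofReal s ≤ c x) :
    PC T (CSet W ψ c s) x = x ∧ QC T (CSet W ψ c s) x = x := by
  have hxx : x ∈ CSet W ψ c s := Or.inr ⟨hx, hc⟩
  have hTx : T x ∈ CSet W ψ c s :=
    Or.inr ⟨fun h => hx ((hD.hWT x).2 h), by rw [hD.hcT x]; exact hc⟩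
  exact ⟨PC_self_mem T hxx hTx, QC_self_mem T hxx hTx⟩

noncomputable def NWf (hD : MasterData T W ψ c) (b₀ : ℝ) (x : X) : ℕ :=
  1 + dfind T (fun k => -(k:ℤ)) (CSet W ψ c b₀) x
    + dfind T (fun k => (k:ℤ)+1) (CSet W ψ c b₀) x

lemma NWf_meas (hD : MasterData T W ψ c) (hT : Measurable ⇑T ∧ Measurable ⇑T.symm) (b₀ : ℝ) :
    Measurable (hD.NWf b₀) := by
  have h1 := measurable_dfind T hT (fun k => -(k:ℤ)) (hD.CSet_meas b₀)
  have h2 := measurable_dfind T hT (fun k => (k:ℤ)+1) (hD.CSet_meas b₀)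
  have : hD.NWf b₀ = (fun p : ℕ × ℕ => 1 + p.1 + p.2) ∘ (fun x =>
      (dfind T (fun k => -(k:ℤ)) (CSet W ψ c b₀) x,
       dfind T (fun k => (k:ℤ)+1) (CSet W ψ c b₀) x)) := rfl
  rw [this]
  exact (measurable_of_countable _).comp (h1.prodMk h2)

/-- The main estimate: where the maps at two parameters `s ≤ u` can differ. -/
lemma Eset_pair (hD : MasterData T W ψ c) {s u b₀ : ℝ} (hsu : s ≤ u) (hub : u ≤ b₀)
    (hb₀ : ENNReal.ofReal b₀ < 1) :
    Eset (hD.fMap s) (hD.fMap u) ⊆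
      {x | x ∈ W ∧ ∃ j : ℤ, j.natAbs ≤ hD.NWf b₀ x ∧
          ψ ((T^j) x) ∈ Ioc (ENNReal.ofReal s) (ENNReal.ofReal u)}
      ∪ {x | x ∉ W ∧ c x ∈ Ico (ENNReal.ofReal s) (ENNReal.ofReal u)} := by
  intro x hx
  have hu1 : ENNReal.ofReal u < 1 := lt_of_le_of_lt (ENNReal.ofReal_le_ofReal hub) hb₀
  have hCsub : CSet W ψ c u ⊆ CSet W ψ c s := hD.CSet_mono hsu
  have hCb₀sub : CSet W ψ c b₀ ⊆ CSet W ψ c u := hD.CSet_mono hub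
  by_cases hxW : x ∈ W
  · left
    refine ⟨hxW, ?_⟩
    have hDb : ∃ k:ℕ, (T^(-(k:ℤ))) x ∈ CSet W ψ c b₀ := hD.exB hxW hb₀
    have hDf : ∃ k:ℕ, (T^((k:ℤ)+1)) x ∈ CSet W ψ c b₀ := hD.exF hxW hb₀
    have hband : ∀ j : ℤ, (T^j) x ∈ CSet W ψ c s → (T^j) x ∉ CSet W ψ c u →
        ψ ((T^j) x) ∈ Ioc (ENNReal.ofReal s) (ENNReal.ofReal u) := by
      intro j hjC hjC'
      have hjW : (T^j) x ∈ W := (hD.memW_zpow j x).1 hxW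
      constructor
      · rcases hjC with ⟨_, hh⟩ | ⟨hh, _⟩
        · exact hh
        · exact absurd hjW hh
      · by_contra hcon
        exact hjC' (Or.inl ⟨hjW, not_le.1 hcon⟩)
    rcases hx with h | h
    · simp only [mem_setOf_eq] at h
      rw [fMap_apply, fMap_apply] at h
      have hb' : ∃ k:ℕ, (T^(-(k:ℤ))) x ∈ CSet W ψ c u := hD.exB hxW hu1
      obtain ⟨j, hjC, hjC', hjlo, hjhi⟩ := agree_PC T hCsub hb' h
      have h1 : Nat.find hb' ≤ dfind T (fun k => -(k:ℤ)) (CSet W ψ c b₀) x := by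
        rw [dfind, dif_pos hDb]
        exact Nat.find_le (hCb₀sub (Nat.find_spec hDb))
      refine ⟨j, ?_, hband j hjC hjC'⟩
      have h2 : (1:ℕ) + dfind T (fun k => -(k:ℤ)) (CSet W ψ c b₀) x ≤ hD.NWf b₀ x := by
        rw [NWf]; omega
      omega
    · simp only [mem_setOf_eq] at h
      rw [fMap_inv_apply, fMap_inv_apply] at h
      have hf' : ∃ k:ℕ, (T^((k:ℤ)+1)) x ∈ CSet W ψ c u := hD.exF hxW hu1
      obtain ⟨j, hjC, hjC', hjlo, hjhi⟩ := agree_QC T hCsub hf' h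
      have h1 : Nat.find hf' ≤ dfind T (fun k => (k:ℤ)+1) (CSet W ψ c b₀) x := by
        rw [dfind, dif_pos hDf]
        exact Nat.find_le (hCb₀sub (Nat.find_spec hDf))
      refine ⟨j, ?_, hband j hjC hjC'⟩
      have h2 : (1:ℕ) + dfind T (fun k => (k:ℤ)+1) (CSet W ψ c b₀) x ≤ hD.NWf b₀ x := by
        rw [NWf]; omega
      omega
  · right
    refine ⟨hxW, ?_, ?_⟩
    · by_contra hcon
      have hlt : c x < ENNReal.ofReal s := not_le.1 hcon
      have h1 := nonW_low hD hxW hlt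
      have h2 := nonW_low hD hxW (lt_of_lt_of_le hlt (ENNReal.ofReal_le_ofReal hsu))
      rcases hx with h | h
      · simp only [mem_setOf_eq] at h
        rw [fMap_apply, fMap_apply, h1.1, h2.1] at h
        exact h rfl
      · simp only [mem_setOf_eq] at h
        rw [fMap_inv_apply, fMap_inv_apply, h1.2, h2.2] at h
        exact h rfl
    · by_contra hcon
      have hge : ENNReal.ofReal u ≤ c x := not_lt.1 hcon
      have h1 := nonW_high hD hxW (le_trans (ENNReal.ofReal_le_ofReal hsu) hge)
      have h2 := nonW_high hD hxW hge
      rcases hx with h | h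
      · simp only [mem_setOf_eq] at h
        rw [fMap_apply, fMap_apply, h1.1, h2.1] at h
        exact h rfl
      · simp only [mem_setOf_eq] at h
        rw [fMap_inv_apply, fMap_inv_apply, h1.2, h2.2] at h
        exact h rfl

noncomputable def Dset (hD : MasterData T W ψ c) (t₀ δ : ℝ) : Set X :=
  {x | x ∈ W ∧ ∃ j : ℤ, j.natAbs ≤ hD.NWf (t₀ + (1-t₀)/2) x ∧
      ψ ((T^j) x) ∈ Ioc (ENNReal.ofReal (t₀-δ)) (ENNReal.ofReal (t₀+δ))}
  ∪ {x | x ∉ W ∧ c x ∈ Ico (ENNReal.ofReal (t₀-δ)) (ENNReal.ofReal (t₀+δ))}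

lemma Dset_meas (hD : MasterData T W ψ c) (hT : Measurable ⇑T ∧ Measurable ⇑T.symm)
    (t₀ δ : ℝ) : MeasurableSet (hD.Dset t₀ δ) := by
  apply MeasurableSet.union
  · have heq : {x | x ∈ W ∧ ∃ j : ℤ, j.natAbs ≤ hD.NWf (t₀ + (1-t₀)/2) x ∧
        ψ ((T^j) x) ∈ Ioc (ENNReal.ofReal (t₀-δ)) (ENNReal.ofReal (t₀+δ))}
        = W ∩ ⋃ j : ℤ, (hD.NWf (t₀ + (1-t₀)/2) ⁻¹' (Ici j.natAbs)
            ∩ (fun x => ψ ((T^j) x)) ⁻¹' (Ioc (ENNReal.ofReal (t₀-δ)) (ENNReal.ofReal (t₀+δ)))) := by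
      ext x
      simp only [mem_inter_iff, mem_iUnion, mem_preimage, mem_setOf_eq, mem_Ici]
      try tauto
    rw [heq]
    refine hD.hWmeas.inter (MeasurableSet.iUnion fun j => MeasurableSet.inter ?_ ?_)
    · exact hD.NWf_meas hT _ measurableSet_Ici
    · exact (hD.hψmeas.comp (measurable_zpow T hT j)) measurableSet_Ioc
  · have heq : {x | x ∉ W ∧ c x ∈ Ico (ENNReal.ofReal (t₀-δ)) (ENNReal.ofReal (t₀+δ))}
        = Wᶜ ∩ c ⁻¹' (Ico (ENNReal.ofReal (t₀-δ)) (ENNReal.ofReal (t₀+δ))) := rfl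
    rw [heq]
    exact hD.hWmeas.compl.inter (hD.hcmeas measurableSet_Ico)

lemma Dset_anti (hD : MasterData T W ψ c) (t₀ : ℝ) {δ δ' : ℝ} (h : δ ≤ δ') :
    hD.Dset t₀ δ ⊆ hD.Dset t₀ δ' := by
  have hIoc : Ioc (ENNReal.ofReal (t₀-δ)) (ENNReal.ofReal (t₀+δ))
      ⊆ Ioc (ENNReal.ofReal (t₀-δ')) (ENNReal.ofReal (t₀+δ')) :=
    Ioc_subset_Ioc (ENNReal.ofReal_le_ofReal (by linarith))
      (ENNReal.ofReal_le_ofReal (by linarith))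
  have hIco : Ico (ENNReal.ofReal (t₀-δ)) (ENNReal.ofReal (t₀+δ))
      ⊆ Ico (ENNReal.ofReal (t₀-δ')) (ENNReal.ofReal (t₀+δ')) :=
    Ico_subset_Ico (ENNReal.ofReal_le_ofReal (by linarith))
      (ENNReal.ofReal_le_ofReal (by linarith))
  rintro x (⟨h1, j, h2, h3⟩ | ⟨h1, h2⟩)
  · exact Or.inl ⟨h1, j, h2, hIoc h3⟩
  · exact Or.inr ⟨h1, hIco h2⟩

lemma Eset_subset_Dset (hD : MasterData T W ψ c) {t₀ t δ : ℝ} (ht₀ : t₀ < 1)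
    (hδ : δ ≤ (1-t₀)/2) (hclose : |t - t₀| ≤ δ) :
    Eset (hD.fMap t) (hD.fMap t₀) ⊆ hD.Dset t₀ δ := by
  have habs := abs_le.1 hclose
  have hb₀ : ENNReal.ofReal (t₀ + (1-t₀)/2) < 1 := by
    rw [ENNReal.ofReal_lt_one]; linarith
  rcases le_total t t₀ with hle | hle
  · have hsub := hD.Eset_pair (s := t) (u := t₀) (b₀ := t₀ + (1-t₀)/2) hle (by linarith) hb₀
    intro x hx
    rcases hsub hx with ⟨h1, j, h2, h3⟩ | ⟨h1, h2⟩
    · exact Or.inl ⟨h1, j, h2, Ioc_subset_Ioc (ENNReal.ofReal_le_ofReal (by linarith))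
        (ENNReal.ofReal_le_ofReal (by linarith)) h3⟩
    · exact Or.inr ⟨h1, Ico_subset_Ico (ENNReal.ofReal_le_ofReal (by linarith))
        (ENNReal.ofReal_le_ofReal (by linarith)) h2⟩
  · have hsub := hD.Eset_pair (s := t₀) (u := t) (b₀ := t₀ + (1-t₀)/2) hle (by linarith) hb₀
    intro x hx
    have hx' : x ∈ Eset (hD.fMap t₀) (hD.fMap t) := by
      rcases hx with h | h
      · exact Or.inl (Ne.symm h)
      · exact Or.inr (Ne.symm h)
    rcases hsub hx' with ⟨h1, j, h2, h3⟩ | ⟨h1, h2⟩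
    · exact Or.inl ⟨h1, j, h2, Ioc_subset_Ioc (ENNReal.ofReal_le_ofReal (by linarith))
        (ENNReal.ofReal_le_ofReal (by linarith)) h3⟩
    · exact Or.inr ⟨h1, Ico_subset_Ico (ENNReal.ofReal_le_ofReal (by linarith))
        (ENNReal.ofReal_le_ofReal (by linarith)) h2⟩

lemma Dcap_countable (hD : MasterData T W ψ c) (t₀ : ℝ) (ht₀ : t₀ < 1) :
    (⋂ n : ℕ, hD.Dset t₀ ((1-t₀)/2/(n+1))).Countable := by
  set d := (1-t₀)/2 with hd
  have hd0 : 0 ≤ d := by rw [hd]; linarith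
  have hsub : (⋂ n : ℕ, hD.Dset t₀ (d/(n+1)))
      ⊆ {x | ∃ k : ℤ, (T^k) x ∈ {y | y ∈ W ∧ ψ y = ENNReal.ofReal t₀}}
        ∪ {x | x ∉ W ∧ c x = ENNReal.ofReal t₀} := by
    intro x hx
    simp only [mem_iInter] at hx
    by_cases hxW : x ∈ W
    · have hjs : ∀ n : ℕ, ∃ j : ℤ, j.natAbs ≤ hD.NWf (t₀ + d) x ∧
          ψ ((T^j) x) ∈ Ioc (ENNReal.ofReal (t₀-d/(n+1))) (ENNReal.ofReal (t₀+d/(n+1))) := by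
        intro n
        rcases hx n with ⟨_, j, h2, h3⟩ | ⟨h1, _⟩
        · exact ⟨j, h2, h3⟩
        · exact absurd hxW h1
      choose j hjb hjband using hjs
      set K := Set.Icc (-(hD.NWf (t₀ + d) x : ℤ)) ((hD.NWf (t₀ + d) x : ℤ)) with hK
      haveI : Finite ↥K := (Set.finite_Icc _ _).to_subtype
      have hmem : ∀ n, j n ∈ K := by
        intro n
        have := hjb n
        simp only [hK, Set.mem_Icc]
        omega
      set F : ℕ → ↥K := fun n => ⟨j n, hmem n⟩ with hF
      obtain ⟨⟨j₀, hj₀⟩, hinf⟩ := Finite.exists_infinite_fiber F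
      have hinf' : (F ⁻¹' {⟨j₀, hj₀⟩} : Set ℕ).Infinite := by
        rw [← Set.infinite_coe_iff] at *
        exact hinf
      have hband : ∀ m:ℕ, ψ ((T^j₀) x) ∈
          Ioc (ENNReal.ofReal (t₀ - d/(m+1))) (ENNReal.ofReal (t₀ + d/(m+1))) := by
        intro m
        obtain ⟨n, hn, hmn⟩ := hinf'.exists_gt m
        have hjn : j n = j₀ := by
          have h5 : F n = ⟨j₀, hj₀⟩ := hn
          exact congrArg Subtype.val h5
        have hcast : ((m:ℝ)+1) ≤ ((n:ℝ)+1) := by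
          have : (m:ℝ) ≤ (n:ℝ) := Nat.cast_le.mpr hmn.le
          linarith
        have hdle : d/(n+1) ≤ d/(m+1) := by
          rw [div_le_div_iff₀ (by positivity) (by positivity)]
          exact mul_le_mul_of_nonneg_left hcast hd0
        have hb := hjband n
        rw [hjn] at hb
        exact Ioc_subset_Ioc (ENNReal.ofReal_le_ofReal (by linarith))
          (ENNReal.ofReal_le_ofReal (by linarith)) hb
      have hψeq : ψ ((T^j₀) x) = ENNReal.ofReal t₀ :=
        ennreal_squeeze _ t₀ d (fun n => (hband n).1.le) (fun n => (hband n).2)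
      exact Or.inl ⟨j₀, (hD.memW_zpow j₀ x).1 hxW, hψeq⟩
    · have hcs : ∀ n : ℕ, c x ∈ Ico (ENNReal.ofReal (t₀-d/(n+1))) (ENNReal.ofReal (t₀+d/(n+1))) := by
        intro n
        rcases hx n with ⟨h1, _⟩ | ⟨_, h2⟩
        · exact absurd h1 hxW
        · exact h2
      have hceq : c x = ENNReal.ofReal t₀ :=
        ennreal_squeeze _ t₀ d (fun n => (hcs n).1) (fun n => (hcs n).2.le)
      exact Or.inr ⟨hxW, hceq⟩
  exact ((countable_saturation T (hD.hψfib (ENNReal.ofReal t₀))).union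
    (hD.hcfib (ENNReal.ofReal t₀))).mono hsub

lemma Eset_one (hD : MasterData T W ψ c) (s : ℝ) :
    Eset (hD.fMap s) (hD.fMap 1) ⊆
      CSet W ψ c s ∪ (fun x => T x) ⁻¹' (CSet W ψ c s) := by
  intro x hx
  rcases hx with h | h
  · simp only [mem_setOf_eq] at h
    right
    show T x ∈ CSet W ψ c s
    by_contra hc
    apply h
    rw [fMap_apply, PC_not_mem T hc, hD.fMap_one]
  · simp only [mem_setOf_eq] at h
    left
    by_contra hc
    apply h
    rw [fMap_inv_apply, QC_not_mem T hc, hD.fMap_one]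

lemma Ecap_empty (hD : MasterData T W ψ c) :
    (⋂ n : ℕ, (CSet W ψ c (1-1/(n+1))
      ∪ (fun x => T x) ⁻¹' (CSet W ψ c (1-1/(n+1))))) = ∅ := by
  have key : ∀ y : X, {n : ℕ | y ∈ CSet W ψ c (1-1/(n+1))}.Infinite → False := by
    intro y hinf
    have hall : ∀ m : ℕ, y ∈ CSet W ψ c (1-1/(m+1)) := by
      intro m
      obtain ⟨n, hn, hmn⟩ := hinf.exists_gt m
      refine hD.CSet_mono ?_ hn
      have h1 : (1:ℝ)/(n+1) ≤ 1/(m+1) := by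
        apply one_div_le_one_div_of_le (by positivity)
        have : (m:ℝ) ≤ n := Nat.cast_le.mpr hmn.le
        linarith
      linarith
    by_cases hyW : y ∈ W
    · have hles : ∀ m:ℕ, ENNReal.ofReal (1-1/(m+1)) ≤ ψ y := by
        intro m
        rcases hall m with ⟨_, hh⟩ | ⟨hh, _⟩
        · exact hh.le
        · exact absurd hyW hh
      exact absurd (ennreal_one_le _ hles) (not_le.2 (hD.hψ1 y hyW))
    · have hles : ∀ m:ℕ, ENNReal.ofReal (1-1/(m+1)) ≤ c y := by
        intro m
        rcases hall m with ⟨hh, _⟩ | ⟨_, hh⟩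
        · exact absurd hh hyW
        · exact hh
      exact absurd (ennreal_one_le _ hles) (not_le.2 (hD.hc1 y))
  ext x
  simp only [mem_iInter, mem_union, mem_preimage, mem_empty_iff_false, iff_false]
  intro hAll
  set P := {n : ℕ | x ∈ CSet W ψ c (1-1/(n+1))} with hP
  set Q := {n : ℕ | T x ∈ CSet W ψ c (1-1/(n+1))} with hQ
  have hPQ : P ∪ Q = univ := by
    ext n
    simp only [mem_union, hP, hQ, mem_setOf_eq, mem_univ, iff_true]
    exact hAll n
  have hor : P.Infinite ∨ Q.Infinite := by
    by_contra hcon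
    push_neg at hcon
    have : (P ∪ Q).Finite := hcon.1.union hcon.2
    rw [hPQ] at this
    exact Set.infinite_univ this
  rcases hor with h | h
  · exact key x h
  · exact key (T x) h

lemma mem_nhds_abs (t₀ : Set.Icc (0:ℝ) 1) {δ : ℝ} (hδ : 0 < δ) :
    {t : Set.Icc (0:ℝ) 1 | |t.1 - t₀.1| < δ} ∈ nhds t₀ := by
  have hopen : IsOpen {t : Set.Icc (0:ℝ) 1 | |t.1 - t₀.1| < δ} := by
    have heq : {t : Set.Icc (0:ℝ) 1 | |t.1 - t₀.1| < δ}
        = (fun t : Set.Icc (0:ℝ) 1 => t.1) ⁻¹' (Metric.ball t₀.1 δ) := by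
      ext t
      simp only [Set.mem_setOf_eq, Set.mem_preimage, Metric.mem_ball, Real.dist_eq]
    rw [heq]
    exact Metric.isOpen_ball.preimage continuous_subtype_val
  apply hopen.mem_nhds
  simp [hδ]

lemma master_tendsto (hD : MasterData T W ψ c)
    (hT : Measurable ⇑T ∧ Measurable ⇑T.symm)
    (μ : Measure X) (hμ : IsProbabilityMeasure μ) (hna : ∀ x : X, μ {x} = 0)
    (t₀ : Set.Icc (0:ℝ) 1) :
    Filter.Tendsto (fun t : Set.Icc (0:ℝ) 1 => μ (Eset (hD.fMap t.1) (hD.fMap t₀.1)))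
      (nhds t₀) (nhds 0) := by
  haveI := hμ
  haveI : NullSingletonClass μ := ⟨hna⟩
  rw [ENNReal.tendsto_nhds_zero]
  intro ε hε
  rcases lt_or_eq_of_le t₀.2.2 with ht₀ | ht₀
  · set d := (1 - t₀.1)/2 with hdd
    have hd0 : 0 < d := by rw [hdd]; linarith
    have hmeas : ∀ n:ℕ, NullMeasurableSet (hD.Dset t₀.1 (d/(n+1))) μ :=
      fun n => (hD.Dset_meas hT _ _).nullMeasurableSet
    have hanti : Antitone (fun n:ℕ => hD.Dset t₀.1 (d/(n+1))) := by
      intro m n hmn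
      apply hD.Dset_anti
      rw [div_le_div_iff₀ (by positivity) (by positivity)]
      have : (m:ℝ) ≤ n := Nat.cast_le.mpr hmn
      nlinarith
    have hlim := tendsto_measure_iInter_atTop hmeas hanti ⟨0, measure_ne_top μ _⟩
    have hcap : μ (⋂ n:ℕ, hD.Dset t₀.1 (d/(n+1))) = 0 :=
      (hD.Dcap_countable t₀.1 ht₀).measure_zero μ
    rw [hcap] at hlim
    have hev := hlim.eventually_lt_const hε
    obtain ⟨n, hn⟩ := hev.exists
    have hδ0 : (0:ℝ) < d/(n+1) := by positivity
    have hδle : d/(n+1) ≤ d := by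
      rw [div_le_iff₀ (by positivity)]
      nlinarith [Nat.cast_nonneg (α := ℝ) n]
    filter_upwards [mem_nhds_abs t₀ hδ0] with t ht
    have hsubE := hD.Eset_subset_Dset (t := t.1) ht₀ hδle ht.le
    exact le_trans (measure_mono hsubE) hn.le
  · have hmeas : ∀ n:ℕ, NullMeasurableSet (CSet W ψ c (1-1/(n+1))
        ∪ (fun x => T x) ⁻¹' (CSet W ψ c (1-1/(n+1)))) μ := fun n =>
      ((hD.CSet_meas _).union (hT.1 (hD.CSet_meas _))).nullMeasurableSet
    have hanti : Antitone (fun n:ℕ => CSet W ψ c (1-1/(n+1))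
        ∪ (fun x => T x) ⁻¹' (CSet W ψ c (1-1/(n+1)))) := by
      intro m n hmn
      have h1 : (1:ℝ)/(n+1) ≤ 1/(m+1) := by
        apply one_div_le_one_div_of_le (by positivity)
        have : (m:ℝ) ≤ n := Nat.cast_le.mpr hmn
        linarith
      have hsub := hD.CSet_mono (show (1:ℝ)-1/(m+1) ≤ 1-1/(n+1) by linarith)
      exact union_subset_union hsub (preimage_mono hsub)
    have hlim := tendsto_measure_iInter_atTop hmeas hanti ⟨0, measure_ne_top μ _⟩
    rw [hD.Ecap_empty, measure_empty] at hlim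
    have hev := hlim.eventually_lt_const hε
    obtain ⟨n, hn⟩ := hev.exists
    have hδ0 : (0:ℝ) < 1/(n+1) := by positivity
    filter_upwards [mem_nhds_abs t₀ hδ0] with t ht
    have habs := (abs_lt.1 ht).1
    have hlev : (1:ℝ)-1/(n+1) ≤ t.1 := by
      rw [ht₀] at habs
      linarith
    have hsubE : Eset (hD.fMap t.1) (hD.fMap t₀.1) ⊆ CSet W ψ c (1-1/(n+1))
        ∪ (fun x => T x) ⁻¹' (CSet W ψ c (1-1/(n+1))) := by
      intro x hx
      rw [ht₀] at hx
      have hx1 := hD.Eset_one t.1 hx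
      have hsub := hD.CSet_mono hlev
      exact union_subset_union hsub (preimage_mono hsub) hx1
    exact le_trans (measure_mono hsubE) hn.le

end MasterData

/-! ### Generic invariance helpers -/

lemma invariant_zpow {T : Equiv.Perm X} (P : X → Prop) (hP : ∀ x, P x ↔ P (T x)) :
    ∀ k : ℤ, ∀ x, P x ↔ P ((T^k) x) := by
  intro k
  induction k using Int.induction_on with
  | zero => intro x; simp
  | succ k ih =>
      intro x
      have h : (T ^ ((k:ℤ))) (T x) = (T^((k:ℤ)+1)) x := by
        have h2 := zpow_apply_zpow T (k:ℤ) 1 x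
        rw [zpow_one] at h2
        exact h2
      rw [← h]
      exact (hP x).trans (ih (T x))
  | pred k ih =>
      intro x
      have h : (T^(-(k:ℤ))) (T⁻¹ x) = (T^(-(k:ℤ)-1)) x := by
        have h2 := zpow_apply_zpow T (-(k:ℤ)) (-1) x
        rw [zpow_neg_one] at h2
        have h3 : (-(k:ℤ)) + (-1) = -(k:ℤ) - 1 := by ring
        rw [h3] at h2
        exact h2
      rw [← h]
      have hx := hP (T⁻¹ x)
      rw [show T (T⁻¹ x) = x from T.apply_symm_apply x] at hx
      exact hx.symm.trans (ih (T⁻¹ x))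

lemma invariant_fun_zpow {α : Type*} {T : Equiv.Perm X} (f : X → α)
    (hf : ∀ x, f (T x) = f x) : ∀ k : ℤ, ∀ x, f ((T^k) x) = f x := by
  intro k
  induction k using Int.induction_on with
  | zero => intro x; simp
  | succ k ih =>
      intro x
      have h : (T ^ ((k:ℤ))) (T x) = (T^((k:ℤ)+1)) x := by
        have h2 := zpow_apply_zpow T (k:ℤ) 1 x
        rw [zpow_one] at h2
        exact h2
      rw [← h, ih, hf]
  | pred k ih =>
      intro x
      have h : (T^(-(k:ℤ))) (T⁻¹ x) = (T^(-(k:ℤ)-1)) x := by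
        have h2 := zpow_apply_zpow T (-(k:ℤ)) (-1) x
        rw [zpow_neg_one] at h2
        have h3 : (-(k:ℤ)) + (-1) = -(k:ℤ) - 1 := by ring
        rw [h3] at h2
        exact h2
      rw [← h, ih]
      have hx := hf (T⁻¹ x)
      rw [show T (T⁻¹ x) = x from T.apply_symm_apply x] at hx
      exact hx.symm

lemma iInf_shift_nat {a : ℕ → ℝ≥0∞} (ha : ∀ m, a (m+1) ≤ a m) :
    ⨅ m, a (m+1) = ⨅ m, a m :=
  le_antisymm (le_iInf fun m => (iInf_le _ m).trans (ha m))
    (le_iInf fun m => iInf_le _ (m+1))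

lemma iSup_shift_int {T : Equiv.Perm X} (h : X → ℝ≥0∞) (x : X) :
    ⨆ k : ℤ, h ((T^k) (T x)) = ⨆ k : ℤ, h ((T^k) x) := by
  have key : ∀ k : ℤ, (T^k) (T x) = (T^(k+1)) x := by
    intro k
    have h2 := zpow_apply_zpow T k 1 x
    rw [zpow_one] at h2
    exact h2
  apply le_antisymm
  · apply iSup_le
    intro k
    rw [key k]
    exact le_iSup (fun k : ℤ => h ((T^k) x)) (k+1)
  · apply iSup_le
    intro k
    have : h ((T^k) x) = h ((T^(k-1)) (T x)) := by
      rw [key (k-1)]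
      congr 1
      ring
    rw [this]
    exact le_iSup (fun k : ℤ => h ((T^k) (T x))) (k-1)

section Concrete
variable {X : Type*} [MeasurableSpace X]
variable (T : Equiv.Perm X)

/-- The injective code, valued in `(1/4, 1/2) ⊆ ℝ≥0∞`. -/
noncomputable def gcode (e : X → ℝ) (x : X) : ℝ≥0∞ :=
  ENNReal.ofReal (1/4 + (1/2 + Real.arctan (e x) / Real.pi) / 4)

lemma gcode_bounds (e : X → ℝ) (x : X) :
    (4:ℝ≥0∞)⁻¹ < gcode e x ∧ gcode e x < (2:ℝ≥0∞)⁻¹ := by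
  have hpi : (0:ℝ) < Real.pi := Real.pi_pos
  have h1 : Real.arctan (e x) / Real.pi < 1/2 := by
    rw [div_lt_iff₀ hpi]
    have := Real.arctan_lt_pi_div_two (e x)
    linarith
  have h2 : -(1/2) < Real.arctan (e x) / Real.pi := by
    rw [lt_div_iff₀ hpi]
    have := Real.neg_pi_div_two_lt_arctan (e x)
    linarith
  have hl : (1/4 : ℝ) < 1/4 + (1/2 + Real.arctan (e x) / Real.pi) / 4 := by linarith
  have hu : (1/4 + (1/2 + Real.arctan (e x) / Real.pi) / 4 : ℝ) < 1/2 := by linarith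
  constructor
  · have : (4:ℝ≥0∞)⁻¹ = ENNReal.ofReal (1/4) := by
      rw [ENNReal.ofReal_div_of_pos (by norm_num)]
      simp
    rw [this, gcode]
    exact ENNReal.ofReal_lt_ofReal_iff_of_nonneg (by norm_num) |>.2 hl
  · have : (2:ℝ≥0∞)⁻¹ = ENNReal.ofReal (1/2) := by
      rw [ENNReal.ofReal_div_of_pos (by norm_num)]
      simp
    rw [this, gcode]
    exact ENNReal.ofReal_lt_ofReal_iff_of_nonneg (by positivity) |>.2 hu

lemma gcode_injective (e : X → ℝ) (he : Function.Injective e) :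
    Function.Injective (gcode e) := by
  intro x y hxy
  have hpi : (0:ℝ) < Real.pi := Real.pi_pos
  rw [gcode, gcode] at hxy
  have h1 : (0:ℝ) ≤ 1/4 + (1/2 + Real.arctan (e x) / Real.pi) / 4 := by
    have := Real.arctan_lt_pi_div_two (e x)
    have := Real.neg_pi_div_two_lt_arctan (e x)
    have h2 : -(1/2) < Real.arctan (e x) / Real.pi := by
      rw [lt_div_iff₀ hpi]; linarith
    linarith
  have h2 : (0:ℝ) ≤ 1/4 + (1/2 + Real.arctan (e y) / Real.pi) / 4 := by
    have := Real.arctan_lt_pi_div_two (e y)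
    have := Real.neg_pi_div_two_lt_arctan (e y)
    have h3 : -(1/2) < Real.arctan (e y) / Real.pi := by
      rw [lt_div_iff₀ hpi]; linarith
    linarith
  have heq := (ENNReal.ofReal_eq_ofReal_iff h1 h2).1 hxy
  have harctan : Real.arctan (e x) = Real.arctan (e y) := by
    field_simp at heq
    linarith
  exact he (Real.arctan_injective harctan)

lemma gcode_measurable (e : X → ℝ) (he : Measurable e) : Measurable (gcode e) := by
  apply ENNReal.measurable_ofReal.comp
  have h1 : Measurable fun x => Real.arctan (e x) :=
    Real.continuous_arctan.measurable.comp he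
  have h2 : Measurable fun x => Real.arctan (e x) / Real.pi := h1.div_const _
  have h3 : Measurable fun x => (1/2 + Real.arctan (e x) / Real.pi) := h2.const_add _
  have h4 : Measurable fun x => (1/2 + Real.arctan (e x) / Real.pi) / 4 := h3.div_const _
  exact h4.const_add _

/-- forward tail sup at stage m -/
noncomputable def Splus (g : X → ℝ≥0∞) (m : ℕ) (x : X) : ℝ≥0∞ :=
  ⨆ k : ℕ, g ((T^((m+k : ℕ):ℤ)) x)

noncomputable def Sminus (g : X → ℝ≥0∞) (m : ℕ) (x : X) : ℝ≥0∞ :=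
  ⨆ k : ℕ, g ((T^(-((m+k : ℕ):ℤ))) x)

noncomputable def dplus (g : X → ℝ≥0∞) (x : X) : ℝ≥0∞ := ⨅ m : ℕ, Splus T g m x
noncomputable def dminus (g : X → ℝ≥0∞) (x : X) : ℝ≥0∞ := ⨅ m : ℕ, Sminus T g m x
noncomputable def dd (g : X → ℝ≥0∞) (x : X) : ℝ≥0∞ := dplus T g x ⊓ dminus T g x

lemma Splus_anti (g : X → ℝ≥0∞) (m : ℕ) (x : X) :
    Splus T g (m+1) x ≤ Splus T g m x := by
  apply iSup_le
  intro k
  have h : (((m+1)+k : ℕ):ℤ) = ((m + (k+1) : ℕ):ℤ) := by push_cast; ring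
  rw [h]
  exact le_iSup (fun k : ℕ => g ((T^((m+k : ℕ):ℤ)) x)) (k+1)

lemma Sminus_anti (g : X → ℝ≥0∞) (m : ℕ) (x : X) :
    Sminus T g (m+1) x ≤ Sminus T g m x := by
  apply iSup_le
  intro k
  have h : (-(((m+1)+k : ℕ):ℤ)) = -((m + (k+1) : ℕ):ℤ) := by push_cast; ring
  rw [h]
  exact le_iSup (fun k : ℕ => g ((T^(-((m+k : ℕ):ℤ))) x)) (k+1)

lemma Splus_T (g : X → ℝ≥0∞) (m : ℕ) (x : X) :
    Splus T g m (T x) = Splus T g (m+1) x := by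
  unfold Splus
  congr 1
  funext k
  congr 1
  have h2 := zpow_apply_zpow T ((m+k : ℕ):ℤ) 1 x
  rw [zpow_one] at h2
  rw [h2]
  congr 1
  push_cast
  ring

lemma dplus_T (g : X → ℝ≥0∞) (x : X) : dplus T g (T x) = dplus T g x := by
  unfold dplus
  have h1 : ∀ m, Splus T g m (T x) = Splus T g (m+1) x := fun m => Splus_T T g m x
  calc ⨅ m, Splus T g m (T x) = ⨅ m, Splus T g (m+1) x := by
        exact iInf_congr h1
    _ = ⨅ m, Splus T g m x := iInf_shift_nat (fun m => Splus_anti T g m x)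

lemma Sminus_T (g : X → ℝ≥0∞) (m : ℕ) (x : X) :
    Sminus T g (m+1) (T x) = Sminus T g m x := by
  unfold Sminus
  congr 1
  funext k
  congr 1
  have h2 := zpow_apply_zpow T (-(((m+1)+k : ℕ):ℤ)) 1 x
  rw [zpow_one] at h2
  rw [h2]
  congr 1
  push_cast
  ring

lemma Sminus_zero_T (g : X → ℝ≥0∞) (x : X) :
    Sminus T g 0 x ≤ Sminus T g 0 (T x) := by
  apply iSup_le
  intro k
  have h : (T^(-((0+k : ℕ):ℤ))) x = (T^(-((0+(k+1) : ℕ):ℤ))) (T x) := by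
    have h2 := zpow_apply_zpow T (-((0+(k+1) : ℕ):ℤ)) 1 x
    rw [zpow_one] at h2
    rw [h2]
    congr 1
    push_cast
    ring
  rw [h]
  exact le_iSup (fun k : ℕ => g ((T^(-((0+k : ℕ):ℤ))) (T x))) (k+1)

lemma dminus_T (g : X → ℝ≥0∞) (x : X) : dminus T g (T x) = dminus T g x := by
  unfold dminus
  apply le_antisymm
  · apply le_iInf
    intro m
    exact (iInf_le _ (m+1)).trans_eq (Sminus_T T g m x)
  · apply le_iInf
    intro m
    cases m with
    | zero => exact (iInf_le _ 0).trans (Sminus_zero_T T g x)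
    | succ m => exact (iInf_le _ m).trans_eq (Sminus_T T g m x).symm

lemma dd_T (g : X → ℝ≥0∞) (x : X) : dd T g (T x) = dd T g x := by
  unfold dd
  rw [dplus_T, dminus_T]

lemma dd_bounds (g : X → ℝ≥0∞) (hg : ∀ x, (4:ℝ≥0∞)⁻¹ < g x ∧ g x < (2:ℝ≥0∞)⁻¹)
    (x : X) : (4:ℝ≥0∞)⁻¹ ≤ dd T g x ∧ dd T g x ≤ (2:ℝ≥0∞)⁻¹ := by
  constructor
  · apply le_inf
    · exact le_iInf fun m => le_iSup_of_le 0 (hg _).1.le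
    · exact le_iInf fun m => le_iSup_of_le 0 (hg _).1.le
  · refine inf_le_left.trans ((iInf_le _ 0).trans ?_)
    exact iSup_le fun k => (hg _).2.le

lemma dplus_meas (g : X → ℝ≥0∞) (hT : Measurable ⇑T ∧ Measurable ⇑T.symm)
    (hg : Measurable g) : Measurable (dplus T g) := by
  apply Measurable.iInf
  intro m
  apply Measurable.iSup
  intro k
  exact hg.comp (measurable_zpow T hT _)

lemma dminus_meas (g : X → ℝ≥0∞) (hT : Measurable ⇑T ∧ Measurable ⇑T.symm)
    (hg : Measurable g) : Measurable (dminus T g) := by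
  apply Measurable.iInf
  intro m
  apply Measurable.iSup
  intro k
  exact hg.comp (measurable_zpow T hT _)

lemma dd_meas (g : X → ℝ≥0∞) (hT : Measurable ⇑T ∧ Measurable ⇑T.symm)
    (hg : Measurable g) : Measurable (dd T g) :=
  (dplus_meas T g hT hg).min (dminus_meas T g hT hg)

end Concrete

section Concrete2
variable {X : Type*} [MeasurableSpace X]
variable (T : Equiv.Perm X) (g : X → ℝ≥0∞)

/-- generic measurability of a least witness function -/
lemma measurable_nfind {p : ℕ → X → Prop} [∀ n x, Decidable (p n x)]
    (hp : ∀ n, MeasurableSet {x | p n x}) :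
    Measurable (fun x => if h : ∃ n, p n x then Nat.find h else 0) := by
  apply measurable_to_countable'
  intro n
  set A : Set X := ⋃ k : ℕ, {x | p k x} with hA
  have hAm : MeasurableSet A := MeasurableSet.iUnion fun k => hp k
  set Fib : ℕ → Set X := fun m => {x | p m x} ∩ ⋂ j : ℕ, ⋂ (_ : j < m), {x | p j x}ᶜ with hFib
  have hFibm : ∀ m, MeasurableSet (Fib m) := fun m =>
    (hp m).inter (MeasurableSet.iInter fun j => MeasurableSet.iInter fun _ => (hp j).compl)
  have key : ∀ x m, ((if h : ∃ n, p n x then Nat.find h else 0) = m ∧ x ∈ A) ↔ x ∈ Fib m := by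
    intro x m
    constructor
    · rintro ⟨hd, hxA⟩
      have hex : ∃ k, p k x := by simpa [hA, mem_iUnion] using hxA
      rw [dif_pos hex] at hd
      subst hd
      refine ⟨Nat.find_spec hex, ?_⟩
      simp only [mem_iInter, mem_compl_iff, mem_setOf_eq]
      intro j hj
      exact Nat.find_min hex hj
    · intro hx
      obtain ⟨hx1, hx2⟩ := hx
      simp only [mem_iInter, mem_compl_iff, mem_setOf_eq] at hx2
      have hex : ∃ k, p k x := ⟨m, hx1⟩
      have hxA : x ∈ A := by simp only [hA, mem_iUnion, mem_setOf_eq]; exact ⟨m, hx1⟩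
      refine ⟨?_, hxA⟩
      rw [dif_pos hex]
      exact (Nat.find_eq_iff hex).2 ⟨hx1, hx2⟩
  by_cases hn : n = 0
  · subst hn
    have heq : (fun x => if h : ∃ n, p n x then Nat.find h else 0) ⁻¹' {0} = Fib 0 ∪ Aᶜ := by
      ext x
      simp only [mem_preimage, mem_singleton_iff, mem_union, mem_compl_iff]
      constructor
      · intro h
        by_cases hxA : x ∈ A
        · exact Or.inl ((key x 0).1 ⟨h, hxA⟩)
        · exact Or.inr hxA
      · rintro (h | h)
        · exact ((key x 0).2 h).1
        · rw [dif_neg]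
          intro hex
          exact h (by simp only [hA, mem_iUnion, mem_setOf_eq]; exact hex)
    rw [heq]
    exact (hFibm 0).union hAm.compl
  · have heq : (fun x => if h : ∃ n, p n x then Nat.find h else 0) ⁻¹' {n} = Fib n := by
      ext x
      simp only [mem_preimage, mem_singleton_iff]
      constructor
      · intro h
        have hxA : x ∈ A := by
          by_contra hxA
          rw [dif_neg] at h
          · exact hn h.symm
          · intro hex
            exact hxA (by simp only [hA, mem_iUnion, mem_setOf_eq]; exact hex)
        exact (key x n).1 ⟨h, hxA⟩
      · intro h
        exact ((key x n).2 h).1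
    rw [heq]
    exact hFibm n

/-! numeral conversions -/
lemma c4 : (4:ℝ≥0∞)⁻¹ = ENNReal.ofReal (1/4) := by
  rw [ENNReal.ofReal_div_of_pos (by norm_num)]; simp
lemma c2 : (2:ℝ≥0∞)⁻¹ = ENNReal.ofReal (1/2) := by
  rw [ENNReal.ofReal_div_of_pos (by norm_num)]; simp
lemma c4pow (n : ℕ) : (4:ℝ≥0∞)⁻¹ ^ n = ENNReal.ofReal ((1/4)^n) := by
  rw [ENNReal.ofReal_pow (by norm_num), c4]
lemma c2pow (n : ℕ) : (2:ℝ≥0∞)⁻¹ ^ n = ENNReal.ofReal ((1/2)^n) := by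
  rw [ENNReal.ofReal_pow (by norm_num), c2]

noncomputable def distf (x : X) : ℝ≥0∞ := (g x - dd T g x) ⊔ (dd T g x - g x)

lemma distf_le (hg : ∀ x, (4:ℝ≥0∞)⁻¹ < g x ∧ g x < (2:ℝ≥0∞)⁻¹) (x : X) :
    distf T g x ≤ (4:ℝ≥0∞)⁻¹ := by
  have hdb := dd_bounds T g hg x
  have h24 : (2:ℝ≥0∞)⁻¹ - 4⁻¹ ≤ 4⁻¹ := by
    rw [c2, c4, ← ENNReal.ofReal_sub _ (by norm_num)]
    exact ENNReal.ofReal_le_ofReal (by norm_num)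
  apply sup_le
  · exact le_trans (tsub_le_tsub (hg x).2.le hdb.1) h24
  · exact le_trans (tsub_le_tsub hdb.2 (hg x).1.le) h24

lemma distf_meas (hT : Measurable ⇑T ∧ Measurable ⇑T.symm) (hgm : Measurable g) :
    Measurable (distf T g) :=
  ((hgm.sub (dd_meas T g hT hgm)).max ((dd_meas T g hT hgm).sub hgm))

lemma distf_ex (x : X) (h : distf T g x ≠ 0) : ∃ n : ℕ, (4:ℝ≥0∞)⁻¹^(n+1) < distf T g x := by
  obtain ⟨n, hn⟩ := ENNReal.exists_inv_two_pow_lt h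
  refine ⟨n, lt_of_le_of_lt ?_ hn⟩
  have h44 : (4:ℝ≥0∞)⁻¹ = 2⁻¹*2⁻¹ := by
    rw [← ENNReal.mul_inv] <;> norm_num
  rw [h44, mul_pow, ← pow_add]
  exact pow_le_pow_right_of_le_one' (by simp) (by omega)

noncomputable def mfun (x : X) : ℕ :=
  if h : ∃ n : ℕ, (4:ℝ≥0∞)⁻¹^(n+1) < distf T g x then Nat.find h else 0

lemma mfun_meas (hT : Measurable ⇑T ∧ Measurable ⇑T.symm) (hgm : Measurable g) :
    Measurable (mfun T g) := by
  unfold mfun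
  exact measurable_nfind (fun n => (distf_meas T g hT hgm) measurableSet_Ioi)

lemma mfun_spec (x : X) (h : distf T g x ≠ 0) :
    (4:ℝ≥0∞)⁻¹^(mfun T g x + 1) < distf T g x := by
  rw [mfun, dif_pos (distf_ex T g x h)]
  exact Nat.find_spec (distf_ex T g x h)

lemma mfun_pos (hg : ∀ x, (4:ℝ≥0∞)⁻¹ < g x ∧ g x < (2:ℝ≥0∞)⁻¹) (x : X)
    (h : distf T g x ≠ 0) : 1 ≤ mfun T g x := by
  by_contra hcon
  have h0 : mfun T g x = 0 := by omega
  have := mfun_spec T g x h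
  rw [h0, pow_one] at this
  exact absurd this (not_lt.2 (distf_le T g hg x))

noncomputable def psiF (x : X) : ℝ≥0∞ :=
  if distf T g x = 0 then g x / 4
  else 1 - (4:ℝ≥0∞)⁻¹^(mfun T g x) * (1 + g x)

lemma psiF_meas (hT : Measurable ⇑T ∧ Measurable ⇑T.symm) (hgm : Measurable g) :
    Measurable (psiF T g) := by
  apply Measurable.ite
  · exact (distf_meas T g hT hgm) (measurableSet_singleton 0)
  · exact hgm.div_const _
  · apply Measurable.const_sub
    apply Measurable.mul
    · exact (measurable_of_countable (fun n : ℕ => (4:ℝ≥0∞)⁻¹^n)).comp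
        (mfun_meas T g hT hgm)
    · exact hgm.const_add _

lemma one_add_le (hg : ∀ x, (4:ℝ≥0∞)⁻¹ < g x ∧ g x < (2:ℝ≥0∞)⁻¹) (x : X) :
    1 + g x ≤ ENNReal.ofReal (3/2) := by
  calc 1 + g x ≤ 1 + 2⁻¹ := by gcongr; exact (hg x).2.le
  _ = ENNReal.ofReal (3/2) := by
      rw [c2, ← ENNReal.ofReal_one, ← ENNReal.ofReal_add] <;> norm_num

lemma psiF_A_le (hg : ∀ x, (4:ℝ≥0∞)⁻¹ < g x ∧ g x < (2:ℝ≥0∞)⁻¹) (x : X)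
    (h : distf T g x ≠ 0) :
    (4:ℝ≥0∞)⁻¹^(mfun T g x) * (1 + g x) ≤ ENNReal.ofReal (3/8) := by
  have h1 : (4:ℝ≥0∞)⁻¹^(mfun T g x) ≤ 4⁻¹ := by
    calc (4:ℝ≥0∞)⁻¹^(mfun T g x) ≤ (4:ℝ≥0∞)⁻¹^1 :=
          pow_le_pow_right_of_le_one' (by simp) (mfun_pos T g hg x h)
    _ = 4⁻¹ := pow_one _
  calc (4:ℝ≥0∞)⁻¹^(mfun T g x) * (1 + g x) ≤ 4⁻¹ * ENNReal.ofReal (3/2) :=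
        mul_le_mul' h1 (one_add_le g hg x)
  _ = ENNReal.ofReal (3/8) := by
      rw [c4, ← ENNReal.ofReal_mul (by norm_num)]
      norm_num

lemma psiF_pos (hg : ∀ x, (4:ℝ≥0∞)⁻¹ < g x ∧ g x < (2:ℝ≥0∞)⁻¹) (x : X) :
    0 < psiF T g x := by
  rw [psiF]
  split_ifs with h
  · have hg0 : g x ≠ 0 := by
      intro h0
      have := (hg x).1
      rw [h0] at this
      simp at this
    exact ENNReal.div_pos hg0 (by simp)
  · rw [tsub_pos_iff_lt]
    refine lt_of_le_of_lt (psiF_A_le T g hg x h) ?_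
    rw [← ENNReal.ofReal_one]
    exact (ENNReal.ofReal_lt_ofReal_iff_of_nonneg (by norm_num)).2 (by norm_num)

lemma psiF_lt_one (hg : ∀ x, (4:ℝ≥0∞)⁻¹ < g x ∧ g x < (2:ℝ≥0∞)⁻¹) (x : X) :
    psiF T g x < 1 := by
  rw [psiF]
  split_ifs with h
  · have h1 : g x / 4 ≤ g x := ENNReal.div_le_of_le_mul
      (le_mul_of_one_le_right zero_le' (by norm_num))
    refine lt_of_le_of_lt h1 (lt_trans (hg x).2 ?_)
    rw [c2, ← ENNReal.ofReal_one]
    exact (ENNReal.ofReal_lt_ofReal_iff_of_nonneg (by norm_num)).2 (by norm_num)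
  · apply ENNReal.sub_lt_self (by simp) (by simp)
    have h1 : (0:ℝ≥0∞) < (4:ℝ≥0∞)⁻¹^(mfun T g x) * (1 + g x) := by
      apply ENNReal.mul_pos
      · exact (ENNReal.pow_ne_zero (by simp) _)
      · simp
    exact h1.ne'

lemma psiF_high_ge (hg : ∀ x, (4:ℝ≥0∞)⁻¹ < g x ∧ g x < (2:ℝ≥0∞)⁻¹) (x : X)
    (h : distf T g x ≠ 0) : ENNReal.ofReal (5/8) ≤ psiF T g x := by
  rw [psiF, if_neg h]
  have h1 : (1:ℝ≥0∞) - ENNReal.ofReal (3/8) ≤ 1 - (4:ℝ≥0∞)⁻¹^(mfun T g x) * (1 + g x) :=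
    tsub_le_tsub_left (psiF_A_le T g hg x h) 1
  refine le_trans (le_of_eq ?_) h1
  rw [← ENNReal.ofReal_one, ← ENNReal.ofReal_sub _ (by norm_num)]
  norm_num

lemma psiF_low_lt (hg : ∀ x, (4:ℝ≥0∞)⁻¹ < g x ∧ g x < (2:ℝ≥0∞)⁻¹) (x : X)
    (h : distf T g x = 0) : psiF T g x < ENNReal.ofReal (1/8) := by
  rw [psiF, if_pos h]
  have h1 : g x / 4 < 2⁻¹ / 4 := by
    rw [div_eq_mul_inv, div_eq_mul_inv]
    exact ENNReal.mul_lt_mul_left (by simp) (by simp) (hg x).2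
  refine lt_of_lt_of_le h1 (le_of_eq ?_)
  rw [c2, show ((4:ℝ≥0∞)) = ENNReal.ofReal (4:ℝ) by simp,
    ← ENNReal.ofReal_div_of_pos (by norm_num)]
  norm_num

end Concrete2

section Concrete3
variable {X : Type*} [MeasurableSpace X]
variable (T : Equiv.Perm X) (g : X → ℝ≥0∞)

lemma find_eq_of_iff {p q : ℕ → Prop} [DecidablePred p] [DecidablePred q]
    (hpq : ∀ n, p n ↔ q n) (hp : ∃ n, p n) (hq : ∃ n, q n) :
    Nat.find hp = Nat.find hq :=
  le_antisymm (Nat.find_le ((hpq _).2 (Nat.find_spec hq)))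
    (Nat.find_le ((hpq _).1 (Nat.find_spec hp)))

lemma ennreal_mul_cancel {a b c : ℝ≥0∞} (ha : a ≠ 0) (ha' : a ≠ ∞) (h : a * b = a * c) :
    b = c :=
  le_antisymm ((ENNReal.mul_le_mul_iff_right ha ha').1 h.le)
    ((ENNReal.mul_le_mul_iff_right ha ha').1 h.ge)

lemma ennreal_eq_of_sub_zero {a b : ℝ≥0∞} (h1 : a - b = 0) (h2 : b - a = 0) : a = b :=
  le_antisymm (tsub_eq_zero_iff_le.1 h1) (tsub_eq_zero_iff_le.1 h2)

lemma psiF_injective (hg : ∀ x, (4:ℝ≥0∞)⁻¹ < g x ∧ g x < (2:ℝ≥0∞)⁻¹)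
    (hginj : Function.Injective g) : Function.Injective (psiF T g) := by
  have hAle1 : ∀ x, distf T g x ≠ 0 → (4:ℝ≥0∞)⁻¹^(mfun T g x) * (1 + g x) ≤ 1 := by
    intro x hx
    refine le_trans (psiF_A_le T g hg x hx) ?_
    rw [← ENNReal.ofReal_one]
    exact ENNReal.ofReal_le_ofReal (by norm_num)
  have hcross : ∀ x y : X, distf T g x ≠ 0 → distf T g y ≠ 0 →
      mfun T g x < mfun T g y →
      (4:ℝ≥0∞)⁻¹^(mfun T g x) * (1 + g x) = (4:ℝ≥0∞)⁻¹^(mfun T g y) * (1 + g y) → False := by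
    intro x y hx hy hlt heq
    set mx := mfun T g x
    set my := mfun T g y
    have h1 : (4:ℝ≥0∞)⁻¹^mx ≤ (4:ℝ≥0∞)⁻¹^mx * (1 + g x) := by
      conv_lhs => rw [← mul_one ((4:ℝ≥0∞)⁻¹^mx)]
      exact mul_le_mul' le_rfl (le_add_right le_rfl)
    have h2 : (4:ℝ≥0∞)⁻¹^my * (1 + g y) ≤ (4:ℝ≥0∞)⁻¹^(mx+1) * ENNReal.ofReal (3/2) :=
      mul_le_mul' (pow_le_pow_right_of_le_one' (by simp) (by omega)) (one_add_le g hg y)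
    have h3 : (4:ℝ≥0∞)⁻¹^(mx+1) * ENNReal.ofReal (3/2)
        = (4:ℝ≥0∞)⁻¹^mx * ENNReal.ofReal (3/8) := by
      rw [pow_succ, mul_assoc]
      congr 1
      rw [c4, ← ENNReal.ofReal_mul (by norm_num)]
      norm_num
    have h4 : (4:ℝ≥0∞)⁻¹^mx ≤ (4:ℝ≥0∞)⁻¹^mx * ENNReal.ofReal (3/8) := by
      calc (4:ℝ≥0∞)⁻¹^mx ≤ (4:ℝ≥0∞)⁻¹^mx * (1 + g x) := h1
      _ = (4:ℝ≥0∞)⁻¹^my * (1 + g y) := heq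
      _ ≤ _ := h2.trans_eq h3
    have h4' : (4:ℝ≥0∞)⁻¹^mx * 1 ≤ (4:ℝ≥0∞)⁻¹^mx * ENNReal.ofReal (3/8) := by
      rwa [mul_one]
    have h5 : (1:ℝ≥0∞) ≤ ENNReal.ofReal (3/8) :=
      (ENNReal.mul_le_mul_iff_right (ENNReal.pow_ne_zero (by simp) _)
        (by simp [ENNReal.pow_ne_top])).1 h4'
    rw [← ENNReal.ofReal_one] at h5
    have := (ENNReal.ofReal_le_ofReal_iff (by norm_num)).1 h5
    norm_num at this
  intro x y hxy
  rw [psiF, psiF] at hxy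
  by_cases hx : distf T g x = 0 <;> by_cases hy : distf T g y = 0
  · rw [if_pos hx, if_pos hy] at hxy
    apply hginj
    rw [div_eq_mul_inv, div_eq_mul_inv, mul_comm (g x), mul_comm (g y)] at hxy
    exact ennreal_mul_cancel (by simp) (by simp) hxy
  · exfalso
    rw [if_pos hx, if_neg hy] at hxy
    have h1 : g x / 4 < ENNReal.ofReal (1/8) := by
      have := psiF_low_lt T g hg x hx
      rwa [psiF, if_pos hx] at this
    have h2 : ENNReal.ofReal (5/8) ≤ 1 - (4:ℝ≥0∞)⁻¹^(mfun T g y) * (1 + g y) := by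
      have := psiF_high_ge T g hg y hy
      rwa [psiF, if_neg hy] at this
    rw [hxy] at h1
    have h3 : ENNReal.ofReal (5/8) < ENNReal.ofReal (1/8) := lt_of_le_of_lt h2 h1
    have := (ENNReal.ofReal_lt_ofReal_iff_of_nonneg (by norm_num)).1 h3
    norm_num at this
  · exfalso
    rw [if_neg hx, if_pos hy] at hxy
    have h1 : g y / 4 < ENNReal.ofReal (1/8) := by
      have := psiF_low_lt T g hg y hy
      rwa [psiF, if_pos hy] at this
    have h2 : ENNReal.ofReal (5/8) ≤ 1 - (4:ℝ≥0∞)⁻¹^(mfun T g x) * (1 + g x) := by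
      have := psiF_high_ge T g hg x hx
      rwa [psiF, if_neg hx] at this
    rw [← hxy] at h1
    have h3 : ENNReal.ofReal (5/8) < ENNReal.ofReal (1/8) := lt_of_le_of_lt h2 h1
    have := (ENNReal.ofReal_lt_ofReal_iff_of_nonneg (by norm_num)).1 h3
    norm_num at this
  · rw [if_neg hx, if_neg hy] at hxy
    have hAeq : (4:ℝ≥0∞)⁻¹^(mfun T g x) * (1 + g x)
        = (4:ℝ≥0∞)⁻¹^(mfun T g y) * (1 + g y) :=
      (ENNReal.sub_right_inj (by simp) (hAle1 x hx) (hAle1 y hy)).1 hxy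
    have hmeq : mfun T g x = mfun T g y := by
      rcases lt_trichotomy (mfun T g x) (mfun T g y) with h | h | h
      · exact absurd (hcross x y hx hy h hAeq) not_false
      · exact h
      · exact absurd (hcross y x hy hx h hAeq.symm) not_false
    rw [hmeq] at hAeq
    have hadd : 1 + g x = 1 + g y :=
      ennreal_mul_cancel (ENNReal.pow_ne_zero (by simp) _)
        (by simp [ENNReal.pow_ne_top]) hAeq
    exact hginj ((ENNReal.add_right_inj (by simp)).1 hadd)

/-- the levels increasing to `1` -/
noncomputable def lev (n : ℕ) : ℝ≥0∞ := 1 - (2:ℝ≥0∞)⁻¹^n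

lemma lev_lt_one (n : ℕ) : lev n < 1 :=
  ENNReal.sub_lt_self (by simp) (by simp) (by simp)

lemma exists_lev {t : ℝ≥0∞} (ht : t < 1) : ∃ n, t ≤ lev n := by
  have h1 : (1:ℝ≥0∞) - t ≠ 0 := (tsub_pos_iff_lt.2 ht).ne'
  obtain ⟨n, hn⟩ := ENNReal.exists_inv_two_pow_lt h1
  refine ⟨n, ?_⟩
  have h2 : t + 2⁻¹^n < 1 := by
    calc t + 2⁻¹^n < t + (1 - t) := by
          exact ENNReal.add_lt_add_left (LT.lt.ne (lt_of_lt_of_le ht le_top)) hn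
    _ = 1 := add_tsub_cancel_of_le ht.le
  exact ENNReal.le_sub_of_add_le_right (by simp [ENNReal.pow_ne_top]) h2.le

lemma psiF_near (hg : ∀ x, (4:ℝ≥0∞)⁻¹ < g x ∧ g x < (2:ℝ≥0∞)⁻¹) (x : X)
    (hd0 : distf T g x ≠ 0) (n : ℕ)
    (hsmall : distf T g x < (2:ℝ≥0∞)⁻¹^n / 8) : lev n < psiF T g x := by
  set m := mfun T g x with hm
  have hAlt : (4:ℝ≥0∞)⁻¹^m * (1 + g x) < (2:ℝ≥0∞)⁻¹^n := by
    have h1 : (4:ℝ≥0∞)⁻¹^m < 4 * distf T g x := by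
      have h2 := mfun_spec T g x hd0
      have h44 : (4:ℝ≥0∞) * 4⁻¹ = 1 := ENNReal.mul_inv_cancel (by simp) (by simp)
      have h3 : (4:ℝ≥0∞)⁻¹^m = 4 * (4:ℝ≥0∞)⁻¹^(m+1) := by
        calc (4:ℝ≥0∞)⁻¹^m = 4⁻¹^m * 1 := (mul_one _).symm
        _ = 4⁻¹^m * (4 * 4⁻¹) := by rw [h44]
        _ = 4 * (4⁻¹^m * 4⁻¹) := by ring
        _ = 4 * 4⁻¹^(m+1) := by rw [pow_succ]
      rw [h3]
      exact ENNReal.mul_lt_mul_right (by simp) (by simp) h2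
    have h4 : (4:ℝ≥0∞)⁻¹^m * (1 + g x) ≤ (4:ℝ≥0∞)⁻¹^m * ENNReal.ofReal (3/2) :=
      mul_le_mul' le_rfl (one_add_le g hg x)
    have h5 : (4:ℝ≥0∞)⁻¹^m * ENNReal.ofReal (3/2)
        < (4 * distf T g x) * ENNReal.ofReal (3/2) := by
      exact ENNReal.mul_lt_mul_left (by norm_num) (by simp) h1
    have h64 : (4:ℝ≥0∞) * ENNReal.ofReal (3/2) = 6 := by
      rw [show ((4:ℝ≥0∞)) = ENNReal.ofReal (4:ℝ) by simp,
        ← ENNReal.ofReal_mul (by norm_num)]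
      norm_num
    have h6 : (4 * distf T g x) * ENNReal.ofReal (3/2) = 6 * distf T g x := by
      rw [mul_comm (4:ℝ≥0∞) (distf T g x), mul_assoc, h64, mul_comm]
    have h7 : (6:ℝ≥0∞) * distf T g x < 6 * ((2:ℝ≥0∞)⁻¹^n / 8) :=
      ENNReal.mul_lt_mul_right (by norm_num) (by simp) hsmall
    have h8 : (6:ℝ≥0∞) * ((2:ℝ≥0∞)⁻¹^n / 8) ≤ (2:ℝ≥0∞)⁻¹^n := by
      rw [← mul_div_assoc]
      apply ENNReal.div_le_of_le_mul
      calc (6:ℝ≥0∞) * (2:ℝ≥0∞)⁻¹^n ≤ 8 * (2:ℝ≥0∞)⁻¹^n :=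
            mul_le_mul' (by norm_num) le_rfl
      _ = (2:ℝ≥0∞)⁻¹^n * 8 := mul_comm _ _
    calc (4:ℝ≥0∞)⁻¹^m * (1 + g x) ≤ _ := h4
    _ < _ := h5
    _ = _ := h6
    _ < _ := h7
    _ ≤ _ := h8
  have hle1 : (2:ℝ≥0∞)⁻¹^n ≤ 1 := by
    calc (2:ℝ≥0∞)⁻¹^n ≤ (2:ℝ≥0∞)⁻¹^0 := pow_le_pow_right_of_le_one' (by simp) (by omega)
    _ = 1 := pow_zero _
  have hpsi : psiF T g x = 1 - (4:ℝ≥0∞)⁻¹^m * (1 + g x) := by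
    rw [psiF, if_neg hd0]
  rw [hpsi, lev]
  exact ((ENNReal.cancel_of_ne (by simp)).tsub_lt_tsub_iff_left_of_le
    (ENNReal.cancel_of_ne (by simp [ENNReal.pow_ne_top])) hle1).2 hAlt

end Concrete3

section Concrete4
variable {X : Type*} [MeasurableSpace X]
variable (T : Equiv.Perm X) (g : X → ℝ≥0∞)

def Aper (x : X) : Prop := ∀ n : ℤ, n ≠ 0 → (T^n) x ≠ x

lemma Aper_T (x : X) : Aper T x ↔ Aper T (T x) := by
  have key : ∀ n : ℤ, (T^n) (T x) = T ((T^n) x) := by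
    intro n
    have e1 := zpow_apply_zpow T n 1 x
    rw [zpow_one] at e1
    have e2 := zpow_apply_zpow T 1 n x
    rw [zpow_one] at e2
    rw [e1, e2, add_comm 1 n]
  constructor
  · intro h n hn heq
    rw [key n] at heq
    exact h n hn (T.injective heq)
  · intro h n hn heq
    apply h n hn
    rw [key n, heq]

def FwdR (x : X) (n : ℕ) : Prop :=
  ∀ m:ℕ, ∃ k:ℕ, m ≤ k ∧ lev n < psiF T g ((T^(k:ℤ)) x)

def BwdR (x : X) (n : ℕ) : Prop :=
  ∀ m:ℕ, ∃ k:ℕ, m ≤ k ∧ lev n < psiF T g ((T^(-(k:ℤ))) x)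

def Wset : Set X := {x | Aper T x ∧ ∀ n:ℕ, FwdR T g x n ∧ BwdR T g x n}

lemma FwdR_key (x : X) (k : ℕ) : (T^(k:ℤ)) (T x) = (T^((k+1:ℕ):ℤ)) x := by
  have e := zpow_apply_zpow T (k:ℤ) 1 x
  rw [zpow_one] at e
  rw [e]
  norm_cast

lemma BwdR_key (x : X) (k : ℕ) : (T^(-((k+1:ℕ):ℤ))) (T x) = (T^(-(k:ℤ))) x := by
  have e := zpow_apply_zpow T (-((k+1:ℕ):ℤ)) 1 x
  rw [zpow_one] at e
  rw [e]
  congr 1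
  push_cast
  ring

lemma FwdR_T (x : X) (n : ℕ) : FwdR T g (T x) n ↔ FwdR T g x n := by
  constructor
  · intro h m
    obtain ⟨k, hk, hψ⟩ := h m
    rw [FwdR_key T x k] at hψ
    exact ⟨k+1, by omega, hψ⟩
  · intro h m
    obtain ⟨k, hk, hψ⟩ := h (m+1)
    refine ⟨k-1, by omega, ?_⟩
    rw [FwdR_key T x (k-1)]
    have e : k - 1 + 1 = k := by omega
    rw [e]
    exact hψ

lemma BwdR_T (x : X) (n : ℕ) : BwdR T g (T x) n ↔ BwdR T g x n := by
  constructor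
  · intro h m
    obtain ⟨k, hk, hψ⟩ := h (m+1)
    refine ⟨k-1, by omega, ?_⟩
    have e : k - 1 + 1 = k := by omega
    rw [← e] at hψ
    rw [BwdR_key T x (k-1)] at hψ
    exact hψ
  · intro h m
    obtain ⟨k, hk, hψ⟩ := h m
    refine ⟨k+1, by omega, ?_⟩
    rw [BwdR_key T x k]
    exact hψ

lemma Wset_T (x : X) : x ∈ Wset T g ↔ T x ∈ Wset T g := by
  unfold Wset
  simp only [mem_setOf_eq]
  constructor
  · rintro ⟨h1, h2⟩
    exact ⟨(Aper_T T x).1 h1, fun n =>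
      ⟨(FwdR_T T g x n).2 (h2 n).1, (BwdR_T T g x n).2 (h2 n).2⟩⟩
  · rintro ⟨h1, h2⟩
    exact ⟨(Aper_T T x).2 h1, fun n =>
      ⟨(FwdR_T T g x n).1 (h2 n).1, (BwdR_T T g x n).1 (h2 n).2⟩⟩

lemma eps_ne_zero (n : ℕ) : (2:ℝ≥0∞)⁻¹^n / 8 ≠ 0 := by
  apply (ENNReal.div_pos (ENNReal.pow_ne_zero (by simp) n) (by simp)).ne'

lemma eps_ne_top (n : ℕ) : (2:ℝ≥0∞)⁻¹^n / 8 ≠ ∞ := by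
  intro h
  have h1 : (2:ℝ≥0∞)⁻¹^n ≤ 1 := by
    calc (2:ℝ≥0∞)⁻¹^n ≤ (2:ℝ≥0∞)⁻¹^0 := pow_le_pow_right_of_le_one' (by simp) (by omega)
    _ = 1 := pow_zero _
  have h2 : (2:ℝ≥0∞)⁻¹^n / 8 ≤ 1 / 8 := by gcongr
  rw [h] at h2
  exact (ENNReal.div_lt_top (by simp) (by simp)).ne (top_le_iff.1 (le_trans le_top h2))

lemma recur_fwd (hg : ∀ x, (4:ℝ≥0∞)⁻¹ < g x ∧ g x < (2:ℝ≥0∞)⁻¹)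
    (hginj : Function.Injective g) (x : X) (haper : Aper T x)
    (hmin : dplus T g x ≤ dminus T g x) :
    ∀ n : ℕ, FwdR T g x n := by
  intro n m
  set D := dplus T g x with hD
  have hdd : dd T g x = D := inf_eq_left.2 hmin
  have hbnds := dd_bounds T g hg x
  have hDne : D ≠ ∞ := by
    rw [← hdd]
    exact (lt_of_le_of_lt hbnds.2 (by simp)).ne
  have hD0 : D ≠ 0 := by
    rw [← hdd]
    intro h0
    rw [h0] at hbnds
    simp at hbnds
  set ε' := ((2:ℝ≥0∞)⁻¹^n / 8) / 2 with hε'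
  have hε'0 : ε' ≠ 0 :=
    (ENNReal.div_pos (eps_ne_zero n) (by simp)).ne'
  have hεhalf : ε' < (2:ℝ≥0∞)⁻¹^n / 8 :=
    ENNReal.half_lt_self (eps_ne_zero n) (eps_ne_top n)
  have h1 : D < D + ε' := ENNReal.lt_add_right hDne hε'0
  have h2 : ⨅ m', Splus T g m' x < D + ε' := hD ▸ h1
  obtain ⟨j₀, hj₀⟩ := iInf_lt_iff.1 h2
  have hupper : ∀ k : ℕ, j₀ ≤ k → g ((T^(k:ℤ)) x) < D + ε' := by
    intro k hk
    refine lt_of_le_of_lt ?_ hj₀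
    have e : ((j₀ + (k - j₀) : ℕ):ℤ) = (k:ℤ) := by omega
    calc g ((T^(k:ℤ)) x) = g ((T^((j₀ + (k - j₀):ℕ):ℤ)) x) := by rw [e]
    _ ≤ Splus T g j₀ x := le_iSup (fun i : ℕ => g ((T^((j₀+i :ℕ):ℤ)) x)) (k - j₀)
  have hlower : ∀ m' : ℕ, ∃ k : ℕ, m' ≤ k ∧ D - ε' < g ((T^(k:ℤ)) x) := by
    intro m'
    have h4 : D - ε' < D := ENNReal.sub_lt_self hDne hD0 hε'0
    have h3 : D - ε' < Splus T g m' x := lt_of_lt_of_le h4 (hD ▸ iInf_le _ m')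
    obtain ⟨k, hk⟩ := lt_iSup_iff.1 h3
    exact ⟨m' + k, by omega, hk⟩
  have hsmalldist : ∀ m', ∃ k:ℕ, m' ≤ k ∧ distf T g ((T^(k:ℤ)) x) ≤ ε' := by
    intro m'
    obtain ⟨k, hk1, hk2⟩ := hlower (max m' j₀)
    refine ⟨k, by omega, ?_⟩
    have hub := hupper k (by omega)
    have hddk : dd T g ((T^(k:ℤ)) x) = D := by
      rw [invariant_fun_zpow (dd T g) (dd_T T g) (k:ℤ) x, hdd]
    rw [distf, hddk]
    apply sup_le
    · exact tsub_le_iff_right.2 (by rw [add_comm]; exact hub.le)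
    · refine tsub_le_iff_right.2 ?_
      calc D ≤ (D - ε') + ε' := le_tsub_add
      _ ≤ g ((T^(k:ℤ)) x) + ε' := add_le_add hk2.le le_rfl
      _ = ε' + g ((T^(k:ℤ)) x) := add_comm _ _
  obtain ⟨k₁, hk₁m, hk₁⟩ := hsmalldist m
  by_cases hz₁ : distf T g ((T^(k₁:ℤ)) x) = 0
  · obtain ⟨k₂, hk₂m, hk₂⟩ := hsmalldist (k₁+1)
    by_cases hz₂ : distf T g ((T^(k₂:ℤ)) x) = 0
    · exfalso
      have heq : ∀ k : ℕ, distf T g ((T^(k:ℤ)) x) = 0 → g ((T^(k:ℤ)) x) = D := by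
        intro k hk
        rw [distf] at hk
        have h5 := sup_eq_bot_iff.1 hk
        have hddk : dd T g ((T^(k:ℤ)) x) = D := by
          rw [invariant_fun_zpow (dd T g) (dd_T T g) (k:ℤ) x, hdd]
        rw [hddk] at h5
        exact ennreal_eq_of_sub_zero h5.1 h5.2
      have e1 := heq k₁ hz₁
      have e2 := heq k₂ hz₂
      have e3 : (T^(k₂:ℤ)) x = (T^(k₁:ℤ)) x := hginj (e2.trans e1.symm)
      have e4 : (T^((k₂:ℤ) - k₁)) x = x := by
        have := congrArg (fun y => (T^(-(k₁:ℤ))) y) e3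
        rw [zpow_apply_zpow, zpow_apply_zpow] at this
        have e5 : -(k₁:ℤ) + (k₁:ℤ) = 0 := by ring
        have e6 : -(k₁:ℤ) + (k₂:ℤ) = (k₂:ℤ) - k₁ := by ring
        rw [e5, e6] at this
        simpa using this
      exact haper ((k₂:ℤ) - k₁) (by omega) e4
    · exact ⟨k₂, by omega, psiF_near T g hg _ hz₂ n (lt_of_le_of_lt hk₂ hεhalf)⟩
  · exact ⟨k₁, hk₁m, psiF_near T g hg _ hz₁ n (lt_of_le_of_lt hk₁ hεhalf)⟩

lemma recur_bwd (hg : ∀ x, (4:ℝ≥0∞)⁻¹ < g x ∧ g x < (2:ℝ≥0∞)⁻¹)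
    (hginj : Function.Injective g) (x : X) (haper : Aper T x)
    (hmin : dminus T g x ≤ dplus T g x) :
    ∀ n : ℕ, BwdR T g x n := by
  intro n m
  set D := dminus T g x with hD
  have hdd : dd T g x = D := inf_eq_right.2 hmin
  have hbnds := dd_bounds T g hg x
  have hDne : D ≠ ∞ := by
    rw [← hdd]
    exact (lt_of_le_of_lt hbnds.2 (by simp)).ne
  have hD0 : D ≠ 0 := by
    rw [← hdd]
    intro h0
    rw [h0] at hbnds
    simp at hbnds
  set ε' := ((2:ℝ≥0∞)⁻¹^n / 8) / 2 with hε'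
  have hε'0 : ε' ≠ 0 :=
    (ENNReal.div_pos (eps_ne_zero n) (by simp)).ne'
  have hεhalf : ε' < (2:ℝ≥0∞)⁻¹^n / 8 :=
    ENNReal.half_lt_self (eps_ne_zero n) (eps_ne_top n)
  have h1 : D < D + ε' := ENNReal.lt_add_right hDne hε'0
  have h2 : ⨅ m', Sminus T g m' x < D + ε' := hD ▸ h1
  obtain ⟨j₀, hj₀⟩ := iInf_lt_iff.1 h2
  have hupper : ∀ k : ℕ, j₀ ≤ k → g ((T^(-(k:ℤ))) x) < D + ε' := by
    intro k hk
    refine lt_of_le_of_lt ?_ hj₀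
    have e : (-((j₀ + (k - j₀) : ℕ):ℤ)) = -(k:ℤ) := by omega
    calc g ((T^(-(k:ℤ))) x) = g ((T^(-((j₀ + (k - j₀):ℕ):ℤ))) x) := by rw [e]
    _ ≤ Sminus T g j₀ x := le_iSup (fun i : ℕ => g ((T^(-((j₀+i :ℕ):ℤ))) x)) (k - j₀)
  have hlower : ∀ m' : ℕ, ∃ k : ℕ, m' ≤ k ∧ D - ε' < g ((T^(-(k:ℤ))) x) := by
    intro m'
    have h4 : D - ε' < D := ENNReal.sub_lt_self hDne hD0 hε'0
    have h3 : D - ε' < Sminus T g m' x := lt_of_lt_of_le h4 (hD ▸ iInf_le _ m')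
    obtain ⟨k, hk⟩ := lt_iSup_iff.1 h3
    exact ⟨m' + k, by omega, hk⟩
  have hsmalldist : ∀ m', ∃ k:ℕ, m' ≤ k ∧ distf T g ((T^(-(k:ℤ))) x) ≤ ε' := by
    intro m'
    obtain ⟨k, hk1, hk2⟩ := hlower (max m' j₀)
    refine ⟨k, by omega, ?_⟩
    have hub := hupper k (by omega)
    have hddk : dd T g ((T^(-(k:ℤ))) x) = D := by
      rw [invariant_fun_zpow (dd T g) (dd_T T g) (-(k:ℤ)) x, hdd]
    rw [distf, hddk]
    apply sup_le
    · exact tsub_le_iff_right.2 (by rw [add_comm]; exact hub.le)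
    · refine tsub_le_iff_right.2 ?_
      calc D ≤ (D - ε') + ε' := le_tsub_add
      _ ≤ g ((T^(-(k:ℤ))) x) + ε' := add_le_add hk2.le le_rfl
      _ = ε' + g ((T^(-(k:ℤ))) x) := add_comm _ _
  obtain ⟨k₁, hk₁m, hk₁⟩ := hsmalldist m
  by_cases hz₁ : distf T g ((T^(-(k₁:ℤ))) x) = 0
  · obtain ⟨k₂, hk₂m, hk₂⟩ := hsmalldist (k₁+1)
    by_cases hz₂ : distf T g ((T^(-(k₂:ℤ))) x) = 0
    · exfalso
      have heq : ∀ k : ℕ, distf T g ((T^(-(k:ℤ))) x) = 0 → g ((T^(-(k:ℤ))) x) = D := by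
        intro k hk
        rw [distf] at hk
        have h5 := sup_eq_bot_iff.1 hk
        have hddk : dd T g ((T^(-(k:ℤ))) x) = D := by
          rw [invariant_fun_zpow (dd T g) (dd_T T g) (-(k:ℤ)) x, hdd]
        rw [hddk] at h5
        exact ennreal_eq_of_sub_zero h5.1 h5.2
      have e1 := heq k₁ hz₁
      have e2 := heq k₂ hz₂
      have e3 : (T^(-(k₂:ℤ))) x = (T^(-(k₁:ℤ))) x := hginj (e2.trans e1.symm)
      have e4 : (T^((k₁:ℤ) - k₂)) x = x := by
        have := congrArg (fun y => (T^((k₁:ℤ))) y) e3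
        rw [zpow_apply_zpow, zpow_apply_zpow] at this
        have e5 : (k₁:ℤ) + -(k₁:ℤ) = 0 := by ring
        have e6 : (k₁:ℤ) + -(k₂:ℤ) = (k₁:ℤ) - k₂ := by ring
        rw [e5, e6] at this
        simpa using this
      exact haper ((k₁:ℤ) - k₂) (by omega) e4
    · exact ⟨k₂, by omega, psiF_near T g hg _ hz₂ n (lt_of_le_of_lt hk₂ hεhalf)⟩
  · exact ⟨k₁, hk₁m, psiF_near T g hg _ hz₁ n (lt_of_le_of_lt hk₁ hεhalf)⟩

end Concrete4

section Concrete5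
variable {X : Type*} [MeasurableSpace X]
variable (T : Equiv.Perm X) (g : X → ℝ≥0∞)

noncomputable def n0 (x : X) : ℕ :=
  if h : ∃ n:ℕ, ¬(FwdR T g x n ∧ BwdR T g x n) then Nat.find h else 0

lemma n0_T (x : X) : n0 T g (T x) = n0 T g x := by
  have hiff : ∀ n, (¬(FwdR T g (T x) n ∧ BwdR T g (T x) n))
      ↔ ¬(FwdR T g x n ∧ BwdR T g x n) := by
    intro n
    rw [FwdR_T, BwdR_T]
  unfold n0
  by_cases h : ∃ n:ℕ, ¬(FwdR T g x n ∧ BwdR T g x n)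
  · have h' : ∃ n, ¬(FwdR T g (T x) n ∧ BwdR T g (T x) n) := by
      obtain ⟨n, hn⟩ := h
      exact ⟨n, (hiff n).2 hn⟩
    rw [dif_pos h', dif_pos h]
    exact find_eq_of_iff hiff h' h
  · have h' : ¬ ∃ n, ¬(FwdR T g (T x) n ∧ BwdR T g (T x) n) := by
      rintro ⟨n, hn⟩
      exact h ⟨n, (hiff n).1 hn⟩
    rw [dif_neg h', dif_neg h]

def isOrig (y : X) : Prop :=
  (¬ BwdR T g y (n0 T g y) ∧ lev (n0 T g y) < psiF T g y ∧
      ∀ j:ℕ, 1 ≤ j → psiF T g ((T^(-(j:ℤ))) y) ≤ lev (n0 T g y))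
  ∨ (BwdR T g y (n0 T g y) ∧ lev (n0 T g y) < psiF T g y ∧
      ∀ j:ℕ, 1 ≤ j → psiF T g ((T^((j:ℤ))) y) ≤ lev (n0 T g y))

/-- existence and uniqueness of the origin on smooth aperiodic orbits -/
lemma keyA (hg : ∀ x, (4:ℝ≥0∞)⁻¹ < g x ∧ g x < (2:ℝ≥0∞)⁻¹)
    (hginj : Function.Injective g) (x : X) (haper : Aper T x)
    (hxw : x ∉ Wset T g) : ∃! k : ℤ, isOrig T g ((T^k) x) := by
  have hex : ∃ n:ℕ, ¬(FwdR T g x n ∧ BwdR T g x n) := by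
    by_contra hcon
    push_neg at hcon
    exact hxw ⟨haper, hcon⟩
  set n₀ := Nat.find hex with hn₀def
  have hn₀ : ¬(FwdR T g x n₀ ∧ BwdR T g x n₀) := Nat.find_spec hex
  have hn0x : n0 T g x = n₀ := by rw [n0, dif_pos hex]
  have hn0orb : ∀ k : ℤ, n0 T g ((T^k) x) = n₀ := by
    intro k
    rw [invariant_fun_zpow (n0 T g) (n0_T T g) k x, hn0x]
  have hForb : ∀ (n : ℕ) (k : ℤ), (FwdR T g ((T^k) x) n ↔ FwdR T g x n) := by
    intro n k
    exact (invariant_zpow (fun y => FwdR T g y n) (fun y => (FwdR_T T g y n).symm) k x).symm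
  have hBorb : ∀ (n : ℕ) (k : ℤ), (BwdR T g ((T^k) x) n ↔ BwdR T g x n) := by
    intro n k
    exact (invariant_zpow (fun y => BwdR T g y n) (fun y => (BwdR_T T g y n).symm) k x).symm
  have hψorb : ∀ (k j : ℤ), psiF T g ((T^j) ((T^k) x)) = psiF T g ((T^(j+k)) x) := by
    intro k j
    rw [zpow_apply_zpow]
  set K : ℤ → Prop := fun k => lev n₀ < psiF T g ((T^k) x) with hK
  by_cases hB : BwdR T g x n₀
  · -- backward recurrence holds, forward fails: take the greatest element of K
    have hF : ¬ FwdR T g x n₀ := fun h => hn₀ ⟨h, hB⟩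
    unfold FwdR at hF
    push_neg at hF
    obtain ⟨mb, hmb⟩ := hF
    -- K is bounded above by mb
    have hKub : ∀ k : ℤ, K k → k < mb := by
      intro k hk
      by_contra hcon
      push_neg at hcon
      have h1 : (mb:ℕ) ≤ k.toNat := by omega
      have h2 := hmb k.toNat h1
      have h3 : ((k.toNat : ℕ):ℤ) = k := by omega
      rw [h3] at h2
      exact absurd hk (by rw [hK]; simp only; exact not_lt.2 h2)
    -- K is nonempty
    obtain ⟨kb, _, hkb⟩ := hB 0
    have hKne : K (-(kb:ℤ)) := hkb
    -- find the greatest element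
    have hQex : ∃ i : ℕ, K ((mb:ℤ) - 1 - i) := by
      refine ⟨((mb:ℤ) - 1 - (-(kb:ℤ))).toNat, ?_⟩
      have h4 : (mb:ℤ) - 1 - (((mb:ℤ) - 1 - (-(kb:ℤ))).toNat : ℤ) = -(kb:ℤ) := by
        have := hKub _ hKne
        omega
      rw [h4]
      exact hKne
    set i₀ := Nat.find hQex with hi₀
    set k₀ := (mb:ℤ) - 1 - i₀ with hk₀
    have hk₀K : K k₀ := Nat.find_spec hQex
    have hk₀max : ∀ k : ℤ, k₀ < k → ¬ K k := by
      intro k hkk hk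
      have h5 : k < mb := hKub k hk
      have h6 : ((mb:ℤ) - 1 - k).toNat < i₀ := by omega
      apply Nat.find_min hQex h6
      have h7 : (mb:ℤ) - 1 - (((mb:ℤ) - 1 - k).toNat : ℤ) = k := by omega
      rw [h7]
      exact hk
    refine ⟨k₀, ?_, ?_⟩
    · -- isOrig holds at T^k₀ x
      right
      refine ⟨?_, ?_, ?_⟩
      · rw [hn0orb k₀]
        exact (hBorb n₀ k₀).2 hB
      · rw [hn0orb k₀]
        exact hk₀K
      · intro j hj
        rw [hn0orb k₀, hψorb k₀ (j:ℤ)]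
        by_contra hcon
        push_neg at hcon
        exact hk₀max ((j:ℤ) + k₀) (by omega) hcon
    · -- uniqueness
      intro k hk
      rcases hk with ⟨h1, _, _⟩ | ⟨_, h2, h3⟩
      · exfalso
        rw [hn0orb k] at h1
        exact h1 ((hBorb n₀ k).2 hB)
      · rw [hn0orb k] at h2 h3
        rcases lt_trichotomy k k₀ with h | h | h
        · exfalso
          have h4 := h3 (k₀ - k).toNat (by omega)
          rw [hψorb k ((k₀ - k).toNat : ℤ)] at h4
          have h5 : (((k₀ - k).toNat : ℕ):ℤ) + k = k₀ := by omega
          rw [h5] at h4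
          exact absurd hk₀K (not_lt.2 h4)
        · exact h
        · exact absurd h2 (hk₀max k h)
  · -- backward recurrence fails: take the least element of K
    have hFall : ∀ n, FwdR T g x n := by
      apply recur_fwd T g hg hginj x haper
      by_contra hcon
      push_neg at hcon
      exact hB (recur_bwd T g hg hginj x haper hcon.le n₀)
    unfold BwdR at hB
    push_neg at hB
    obtain ⟨mb, hmb⟩ := hB
    have hKlb : ∀ k : ℤ, K k → -(mb:ℤ) < k := by
      intro k hk
      by_contra hcon
      push_neg at hcon
      have h1 : (mb:ℕ) ≤ (-k).toNat := by omega
      have h2 := hmb (-k).toNat h1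
      have h3 : -(((-k).toNat : ℕ):ℤ) = k := by omega
      rw [h3] at h2
      exact absurd hk (by rw [hK]; simp only; exact not_lt.2 h2)
    obtain ⟨kb, _, hkb⟩ := hFall n₀ 0
    have hKne : K (kb:ℤ) := hkb
    have hQex : ∃ i : ℕ, K (-(mb:ℤ) + 1 + i) := by
      refine ⟨((kb:ℤ) - (-(mb:ℤ) + 1)).toNat, ?_⟩
      have h4 : -(mb:ℤ) + 1 + (((kb:ℤ) - (-(mb:ℤ) + 1)).toNat : ℤ) = (kb:ℤ) := by
        have := hKlb _ hKne
        omega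
      rw [h4]
      exact hKne
    set i₀ := Nat.find hQex with hi₀
    set k₀ := -(mb:ℤ) + 1 + i₀ with hk₀
    have hk₀K : K k₀ := Nat.find_spec hQex
    have hk₀min : ∀ k : ℤ, k < k₀ → ¬ K k := by
      intro k hkk hk
      have h5 := hKlb k hk
      have h6 : (k - (-(mb:ℤ) + 1)).toNat < i₀ := by omega
      apply Nat.find_min hQex h6
      have h7 : -(mb:ℤ) + 1 + ((k - (-(mb:ℤ) + 1)).toNat : ℤ) = k := by omega
      rw [h7]
      exact hk
    refine ⟨k₀, ?_, ?_⟩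
    · left
      refine ⟨?_, ?_, ?_⟩
      · rw [hn0orb k₀]
        intro hcon
        exact (by unfold BwdR; push_neg; exact ⟨mb, hmb⟩ : ¬ BwdR T g x n₀) ((hBorb n₀ k₀).1 hcon)
      · rw [hn0orb k₀]
        exact hk₀K
      · intro j hj
        rw [hn0orb k₀, hψorb k₀ (-(j:ℤ))]
        by_contra hcon
        push_neg at hcon
        exact hk₀min (-(j:ℤ) + k₀) (by omega) hcon
    · intro k hk
      rcases hk with ⟨_, h2, h3⟩ | ⟨h1, _, _⟩
      · rw [hn0orb k] at h2 h3
        rcases lt_trichotomy k k₀ with h | h | h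
        · exact absurd h2 (hk₀min k h)
        · exact h
        · exfalso
          have h4 := h3 (k - k₀).toNat (by omega)
          rw [hψorb k (-((k - k₀).toNat : ℤ))] at h4
          have h5 : -(((k - k₀).toNat : ℕ):ℤ) + k = k₀ := by omega
          rw [h5] at h4
          exact absurd hk₀K (not_lt.2 h4)
      · exfalso
        rw [hn0orb k] at h1
        exact (by unfold BwdR; push_neg; exact ⟨mb, hmb⟩ : ¬ BwdR T g x n₀) ((hBorb n₀ k).1 h1)

noncomputable def Smax (x : X) : ℝ≥0∞ := ⨆ k:ℤ, g ((T^k) x)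

noncomputable def cA (x : X) : ℝ≥0∞ :=
  ⨆ k:ℤ, (if isOrig T g ((T^k) x) then g ((T^k) x) else 0)

noncomputable def cfun (x : X) : ℝ≥0∞ :=
  if Aper T x then cA T g x else Smax T g x

lemma cfun_T (x : X) : cfun T g (T x) = cfun T g x := by
  unfold cfun
  by_cases h : Aper T x
  · rw [if_pos h, if_pos ((Aper_T T x).1 h)]
    unfold cA
    exact iSup_shift_int (fun y => if isOrig T g y then g y else 0) x
  · rw [if_neg h, if_neg (fun h2 => h ((Aper_T T x).2 h2))]
    exact iSup_shift_int g x

lemma cfun_lt_one (hg : ∀ x, (4:ℝ≥0∞)⁻¹ < g x ∧ g x < (2:ℝ≥0∞)⁻¹) (x : X) :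
    cfun T g x < 1 := by
  have h2 : (2:ℝ≥0∞)⁻¹ < 1 := by
    rw [c2, ← ENNReal.ofReal_one]
    exact (ENNReal.ofReal_lt_ofReal_iff_of_nonneg (by norm_num)).2 (by norm_num)
  have hcA : cA T g x ≤ 2⁻¹ := by
    apply iSup_le
    intro k
    split_ifs
    · exact (hg _).2.le
    · exact zero_le'
  have hS : Smax T g x ≤ 2⁻¹ := iSup_le fun k => (hg _).2.le
  unfold cfun
  split_ifs
  · exact lt_of_le_of_lt hcA h2
  · exact lt_of_le_of_lt hS h2

lemma smax_attained (x : X) (hnaper : ¬ Aper T x) :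
    ∃ k:ℤ, g ((T^k) x) = Smax T g x := by
  unfold Aper at hnaper
  push_neg at hnaper
  obtain ⟨p, hp0, hpx⟩ := hnaper
  set q := p.natAbs with hq
  have hq0 : 0 < q := by omega
  have hqx : (T^((q:ℕ):ℤ)) x = x := by
    rcases Int.natAbs_eq p with h | h
    · rw [← h]; exact hpx
    · have h2 := congrArg (fun y => (T^((q:ℕ):ℤ)) y) hpx
      rw [zpow_apply_zpow] at h2
      have h3 : ((q:ℕ):ℤ) + p = 0 := by omega
      rw [h3] at h2
      simp only [zpow_zero, Equiv.Perm.coe_one, id_eq] at h2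
      exact h2.symm
  have hmul : ∀ a : ℤ, (T^((q:ℤ) * a)) x = x := by
    intro a
    induction a using Int.induction_on with
    | zero => simp
    | succ a ih =>
        have h1 : (q:ℤ) * (a+1) = (q:ℤ) + (q:ℤ)*a := by ring
        rw [h1, ← zpow_apply_zpow T ((q:ℤ)) ((q:ℤ)*a) x, ih]
        exact hqx
    | pred a ih =>
        have hqx' : (T^(-(q:ℤ))) x = x := by
          have h2 := congrArg (fun y => (T^(-(q:ℤ))) y) hqx
          rw [zpow_apply_zpow] at h2
          have h3 : -(q:ℤ) + (q:ℤ) = 0 := by ring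
          rw [h3] at h2
          simp only [zpow_zero, Equiv.Perm.coe_one, id_eq] at h2
          exact h2.symm
        have h1 : (q:ℤ) * (-a-1) = -(q:ℤ) + (q:ℤ)*(-a) := by ring
        rw [h1, ← zpow_apply_zpow T (-(q:ℤ)) ((q:ℤ)*(-a)) x, ih]
        exact hqx'
  have hper : ∀ k : ℤ, (T^k) x = (T^(k % (q:ℤ))) x := by
    intro k
    have h1 : k = k % (q:ℤ) + (q:ℤ) * (k / (q:ℤ)) := by
      rw [add_comm]
      exact (Int.mul_ediv_add_emod k q).symm
    calc (T^k) x = (T^(k % (q:ℤ) + (q:ℤ) * (k / (q:ℤ)))) x := by rw [← h1]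
    _ = (T^(k % (q:ℤ))) ((T^((q:ℤ) * (k / (q:ℤ)))) x) := (zpow_apply_zpow T _ _ x).symm
    _ = (T^(k % (q:ℤ))) x := by rw [hmul]
  obtain ⟨r₀, hr₀mem, hr₀max⟩ := Finset.exists_max_image (Finset.range q)
    (fun r : ℕ => g ((T^((r:ℕ):ℤ)) x)) ⟨0, Finset.mem_range.2 hq0⟩
  refine ⟨(r₀:ℤ), le_antisymm (le_iSup (fun k : ℤ => g ((T^k) x)) ((r₀:ℕ):ℤ)) ?_⟩
  apply iSup_le
  intro k
  rw [hper k]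
  have h2 : (k % (q:ℤ)).toNat ∈ Finset.range q := by
    rw [Finset.mem_range]
    have := Int.emod_nonneg k (by omega : (q:ℤ) ≠ 0)
    have := Int.emod_lt_of_pos k (by omega : 0 < (q:ℤ))
    omega
  have h3 : (((k % (q:ℤ)).toNat : ℕ):ℤ) = k % (q:ℤ) := by
    have := Int.emod_nonneg k (by omega : (q:ℤ) ≠ 0)
    omega
  have h4 := hr₀max _ h2
  rw [h3] at h4
  exact h4

end Concrete5

theorem master_exists (T : Equiv.Perm X) (hT : Measurable ⇑T ∧ Measurable ⇑T.symm)
    (W : Set X) (ψ c : X → ℝ≥0∞) (hD : MasterData T W ψ c) :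
    ∃ f : Set.Icc (0 : ℝ) 1 → Equiv.Perm X,
      (∀ t, IsBorelAuto (f t)) ∧
      f ⟨0, by norm_num⟩ = 1 ∧ f ⟨1, by norm_num⟩ = T ∧
      (∀ t (x : X), ∃ n : ℤ, f t x = (T ^ n) x) ∧
      ∀ (μ : Measure X), IsProbabilityMeasure μ → (∀ x : X, μ {x} = 0) →
        ∀ t₀ : Set.Icc (0 : ℝ) 1,
          Filter.Tendsto (fun t => μ (Eset (f t) (f t₀))) (nhds t₀) (nhds 0) := by
  refine ⟨fun t => hD.fMap t.1, ?_, ?_, ?_, ?_, ?_⟩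
  · intro t
    exact hD.fMap_borel hT t.1
  · exact hD.fMap_zero
  · exact hD.fMap_one
  · intro t x
    exact hD.fMap_fullgroup t.1 x
  · intro μ hμ hna t₀
    exact hD.master_tendsto hT μ hμ hna t₀


end Master

section Concrete6
variable {X : Type*} [MeasurableSpace X]
variable (T : Equiv.Perm X) (g : X → ℝ≥0∞)

lemma Aper_meas (hT : Measurable ⇑T ∧ Measurable ⇑T.symm) (e : X → ℝ)
    (hem : Measurable e) (hei : Function.Injective e) :
    MeasurableSet {x | Aper T x} := by
  have hset : {x | Aper T x} = ⋂ n:ℤ, {x : X | n = 0 ∨ (T^n) x ≠ x} := by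
    ext x
    simp only [mem_iInter, mem_setOf_eq, Aper]
    constructor
    · intro h n
      by_cases hn : n = 0
      · exact Or.inl hn
      · exact Or.inr (h n hn)
    · intro h n hn
      rcases h n with h' | h'
      · exact absurd h' hn
      · exact h'
  rw [hset]
  apply MeasurableSet.iInter
  intro n
  by_cases hn : n = 0
  · have : {x : X | n = 0 ∨ (T^n) x ≠ x} = univ := by
      ext x; simp [hn]
    rw [this]
    exact MeasurableSet.univ
  · have : {x : X | n = 0 ∨ (T^n) x ≠ x}
        = ((fun x => e ((T^n) x) - e x) ⁻¹' {0})ᶜ := by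
      ext x
      simp only [mem_setOf_eq, mem_compl_iff, mem_preimage, mem_singleton_iff,
        sub_eq_zero, hn, false_or]
      constructor
      · intro h he
        exact h (hei he)
      · intro h he
        exact h (by rw [he])
    rw [this]
    exact (((hem.comp (measurable_zpow T hT n)).sub hem) (measurableSet_singleton 0)).compl

lemma FwdR_setmeas (hT : Measurable ⇑T ∧ Measurable ⇑T.symm) (hgm : Measurable g)
    (n : ℕ) : MeasurableSet {x | FwdR T g x n} := by
  have hset : {x | FwdR T g x n}
      = ⋂ m:ℕ, ⋃ k:ℕ, ⋃ (_ : m ≤ k), {x | lev n < psiF T g ((T^(k:ℤ)) x)} := by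
    ext x
    simp only [mem_iInter, mem_iUnion, mem_setOf_eq, FwdR, exists_prop]
  rw [hset]
  exact MeasurableSet.iInter fun m => MeasurableSet.iUnion fun k =>
    MeasurableSet.iUnion fun _ =>
      ((psiF_meas T g hT hgm).comp (measurable_zpow T hT _)) measurableSet_Ioi

lemma BwdR_setmeas (hT : Measurable ⇑T ∧ Measurable ⇑T.symm) (hgm : Measurable g)
    (n : ℕ) : MeasurableSet {x | BwdR T g x n} := by
  have hset : {x | BwdR T g x n}
      = ⋂ m:ℕ, ⋃ k:ℕ, ⋃ (_ : m ≤ k), {x | lev n < psiF T g ((T^(-(k:ℤ))) x)} := by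
    ext x
    simp only [mem_iInter, mem_iUnion, mem_setOf_eq, BwdR, exists_prop]
  rw [hset]
  exact MeasurableSet.iInter fun m => MeasurableSet.iUnion fun k =>
    MeasurableSet.iUnion fun _ =>
      ((psiF_meas T g hT hgm).comp (measurable_zpow T hT _)) measurableSet_Ioi

lemma Wset_meas (hT : Measurable ⇑T ∧ Measurable ⇑T.symm) (hgm : Measurable g)
    (e : X → ℝ) (hem : Measurable e) (hei : Function.Injective e) :
    MeasurableSet (Wset T g) := by
  have hset : Wset T g = {x | Aper T x}
      ∩ ⋂ n:ℕ, ({x | FwdR T g x n} ∩ {x | BwdR T g x n}) := by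
    ext x
    simp only [Wset, mem_setOf_eq, mem_inter_iff, mem_iInter]
    try tauto
  rw [hset]
  exact (Aper_meas T hT e hem hei).inter (MeasurableSet.iInter fun n =>
    (FwdR_setmeas T g hT hgm n).inter (BwdR_setmeas T g hT hgm n))

lemma n0_meas (hT : Measurable ⇑T ∧ Measurable ⇑T.symm) (hgm : Measurable g) :
    Measurable (n0 T g) := by
  unfold n0
  exact measurable_nfind fun n =>
    ((FwdR_setmeas T g hT hgm n).inter (BwdR_setmeas T g hT hgm n)).compl

lemma isOrig_setmeas (hT : Measurable ⇑T ∧ Measurable ⇑T.symm) (hgm : Measurable g) :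
    MeasurableSet {y | isOrig T g y} := by
  have hset : {y | isOrig T g y} = ⋃ n:ℕ, ((n0 T g ⁻¹' {n}) ∩
      (({y | BwdR T g y n}ᶜ ∩ {y | lev n < psiF T g y} ∩
        ⋂ j:ℕ, ⋂ (_ : 1 ≤ j), {y | psiF T g ((T^(-(j:ℤ))) y) ≤ lev n})
      ∪ ({y | BwdR T g y n} ∩ {y | lev n < psiF T g y} ∩
        ⋂ j:ℕ, ⋂ (_ : 1 ≤ j), {y | psiF T g ((T^((j:ℤ))) y) ≤ lev n}))) := by
    ext y
    simp only [mem_iUnion, mem_inter_iff, mem_preimage, mem_singleton_iff,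
      mem_compl_iff, mem_iInter, mem_setOf_eq, mem_union, isOrig]
    constructor
    · rintro (⟨h1, h2, h3⟩ | ⟨h1, h2, h3⟩)
      · exact ⟨n0 T g y, rfl, Or.inl ⟨⟨h1, h2⟩, h3⟩⟩
      · exact ⟨n0 T g y, rfl, Or.inr ⟨⟨h1, h2⟩, h3⟩⟩
    · rintro ⟨n, hn, (⟨⟨h1, h2⟩, h3⟩ | ⟨⟨h1, h2⟩, h3⟩)⟩
      · subst hn
        exact Or.inl ⟨h1, h2, h3⟩
      · subst hn
        exact Or.inr ⟨h1, h2, h3⟩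
  rw [hset]
  have hψm := psiF_meas T g hT hgm
  apply MeasurableSet.iUnion
  intro n
  apply MeasurableSet.inter
  · exact n0_meas T g hT hgm (measurableSet_singleton n)
  · apply MeasurableSet.union
    · refine MeasurableSet.inter (MeasurableSet.inter ?_ ?_) ?_
      · exact (BwdR_setmeas T g hT hgm n).compl
      · exact hψm measurableSet_Ioi
      · exact MeasurableSet.iInter fun j => MeasurableSet.iInter fun _ =>
          ((hψm.comp (measurable_zpow T hT _)) measurableSet_Iic)
    · refine MeasurableSet.inter (MeasurableSet.inter ?_ ?_) ?_
      · exact BwdR_setmeas T g hT hgm n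
      · exact hψm measurableSet_Ioi
      · exact MeasurableSet.iInter fun j => MeasurableSet.iInter fun _ =>
          ((hψm.comp (measurable_zpow T hT _)) measurableSet_Iic)

lemma cfun_meas (hT : Measurable ⇑T ∧ Measurable ⇑T.symm) (hgm : Measurable g)
    (e : X → ℝ) (hem : Measurable e) (hei : Function.Injective e) :
    Measurable (cfun T g) := by
  unfold cfun
  apply Measurable.ite
  · exact Aper_meas T hT e hem hei
  · unfold cA
    apply Measurable.iSup
    intro k
    apply Measurable.ite
    · exact (measurable_zpow T hT k) (isOrig_setmeas T g hT hgm)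
    · exact hgm.comp (measurable_zpow T hT k)
    · exact measurable_const
  · unfold Smax
    exact Measurable.iSup fun k => hgm.comp (measurable_zpow T hT k)

lemma cfun_fib (hg : ∀ x, (4:ℝ≥0∞)⁻¹ < g x ∧ g x < (2:ℝ≥0∞)⁻¹)
    (hginj : Function.Injective g) (v : ℝ≥0∞) :
    {x | x ∉ Wset T g ∧ cfun T g x = v}.Countable := by
  have hfib : {y | g y = v}.Countable :=
    Set.Subsingleton.countable (fun a ha b hb => hginj (ha.trans hb.symm))
  have hsub : {x | x ∉ Wset T g ∧ cfun T g x = v}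
      ⊆ {x | ∃ k:ℤ, (T^k) x ∈ {y | g y = v}} := by
    rintro x ⟨hxw, hcv⟩
    by_cases ha : Aper T x
    · obtain ⟨k₀, hk₀, huniq⟩ := keyA T g hg hginj x ha hxw
      have hval : cfun T g x = g ((T^k₀) x) := by
        rw [cfun, if_pos ha]
        unfold cA
        apply le_antisymm
        · apply iSup_le
          intro k
          split_ifs with hio
          · rw [huniq k hio]
          · exact zero_le'
        · have h1 := le_iSup
            (fun k:ℤ => if isOrig T g ((T^k) x) then g ((T^k) x) else 0) k₀
          rwa [if_pos hk₀] at h1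
      exact ⟨k₀, hval.symm.trans hcv⟩
    · obtain ⟨k, hk⟩ := smax_attained T g x ha
      refine ⟨k, ?_⟩
      show g ((T^k) x) = v
      rw [hk]
      rw [cfun, if_neg ha] at hcv
      exact hcv
  exact ((countable_saturation T hfib).mono hsub)

end Concrete6

theorem full_group_path_connected' {X : Type*} [MeasurableSpace X]
    [StandardBorelSpace X] [Uncountable X]
    (T : Equiv.Perm X) (hT : IsBorelAuto T) :
    ∃ f : Set.Icc (0 : ℝ) 1 → Equiv.Perm X,
      (∀ t, IsBorelAuto (f t)) ∧
      f ⟨0, by norm_num⟩ = 1 ∧ f ⟨1, by norm_num⟩ = T ∧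
      (∀ t (x : X), ∃ n : ℤ, f t x = (T ^ n) x) ∧
      ∀ (μ : Measure X), IsProbabilityMeasure μ → (∀ x : X, μ {x} = 0) →
        ∀ t₀ : Set.Icc (0 : ℝ) 1,
          Filter.Tendsto (fun t => μ (Eset (f t) (f t₀))) (nhds t₀) (nhds 0) := by
  obtain ⟨e, he⟩ := exists_measurableEmbedding_real X
  have hT' : Measurable ⇑T ∧ Measurable ⇑T.symm := hT
  set g := gcode e with hgdef
  have hg : ∀ x, (4:ℝ≥0∞)⁻¹ < g x ∧ g x < (2:ℝ≥0∞)⁻¹ := gcode_bounds e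
  have hginj : Function.Injective g := gcode_injective e he.injective
  have hgm : Measurable g := gcode_measurable e he.measurable
  have hD : MasterData T (Wset T g) (psiF T g) (cfun T g) := by
    refine ⟨?_, ?_, ?_, ?_, ?_, ?_, ?_, ?_, ?_, ?_, ?_, ?_⟩
    · exact fun x => Wset_T T g x
    · exact fun x => cfun_T T g x
    · exact fun x _ => psiF_pos T g hg x
    · exact fun x _ => psiF_lt_one T g hg x
    · exact fun x => cfun_lt_one T g hg x
    · intro x hx t ht m
      obtain ⟨n, hn⟩ := exists_lev ht
      obtain ⟨k, hk1, hk2⟩ := (hx.2 n).1 m.toNat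
      exact ⟨(k:ℤ), by omega, lt_of_le_of_lt hn hk2⟩
    · intro x hx t ht m
      obtain ⟨n, hn⟩ := exists_lev ht
      obtain ⟨k, hk1, hk2⟩ := (hx.2 n).2 (-m).toNat
      exact ⟨-(k:ℤ), by omega, lt_of_le_of_lt hn hk2⟩
    · intro v
      exact Set.Subsingleton.countable
        (fun a ha b hb => psiF_injective T g hg hginj (ha.2.trans hb.2.symm))
    · exact fun v => cfun_fib T g hg hginj v
    · exact Wset_meas T g hT' hgm e he.measurable he.injective
    · exact psiF_meas T g hT' hgm
    · exact cfun_meas T g hT' hgm e he.measurable he.injective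
  exact master_exists T hT' (Wset T g) (psiF T g) (cfun T g) hD

/-- the full group of any Borel automorphism is path-connected
in the quotient uniform topology `τ₀`. -/
theorem full_group_path_connected {X : Type*} [MeasurableSpace X]
    [StandardBorelSpace X] [Uncountable X]
    (T : Equiv.Perm X) (hT : IsBorelAuto T) :
    ∃ f : Set.Icc (0 : ℝ) 1 → Equiv.Perm X,
      (∀ t, IsBorelAuto (f t)) ∧
      f ⟨0, by norm_num⟩ = 1 ∧ f ⟨1, by norm_num⟩ = T ∧
      (∀ t (x : X), ∃ n : ℤ, f t x = (T ^ n) x) ∧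
      ∀ (μ : Measure X), IsProbabilityMeasure μ → (∀ x : X, μ {x} = 0) →
        ∀ t₀ : Set.Icc (0 : ℝ) 1,
          Filter.Tendsto (fun t => μ (Eset (f t) (f t₀))) (nhds t₀) (nhds 0) := by
  exact full_group_path_connected' T hT
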